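/- arXiv:1608.03766 — 4 statements merged into one kernel-verified Lean document; each statement's English description precedes it below -/
import Mathlib

section
/- Let H = L²(0,1), let E = C([0,1]) with the supremum norm, and let ι : E → H be the canonical continuous linear embedding. For every φ ∈ C¹_b(E) there exists a sequence (φ_n) ⊆ C¹_b(H) such that: (i) sup_n ‖φ_n‖_∞ ≤ ‖φ‖_∞; (ii) for every x ∈ E, φ_n(ι x) → φ(x) as n → ∞; (iii) for all x, z ∈ E, ⟨Dφ_n(ι x), ι z⟩_H → Dφ(x)(z) as n → ∞; (iv) for every z ∈ E, sup_n sup_{y ∈ H} |⟨Dφ_n(y), ι z⟩_H| < ∞. -/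
open MeasureTheory Filter

noncomputable section

/-- `E = C([0,1])` with the supremum norm. -/
abbrev E : Type := C(Set.Icc (0:ℝ) 1, ℝ)

/-- `H = L²(0,1)`. -/
abbrev H : Type := Lp ℝ 2 (volume : Measure (Set.Icc (0:ℝ) 1))

/-- The canonical continuous linear embedding `ι : E → H`. -/
def iota : E →L[ℝ] H := ContinuousMap.toLp 2 volume ℝ

namespace S3

/-- hat function -/
def hat (N k : ℕ) : E :=
  ⟨fun t => max 0 (1 - |(N:ℝ) * (t:ℝ) - (k:ℝ)|), by fun_prop⟩

lemma hat_nonneg (N k : ℕ) (t : Set.Icc (0:ℝ) 1) : 0 ≤ hat N k t := le_max_left _ _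

lemma hat_eq_zero {N k : ℕ} {t : Set.Icc (0:ℝ) 1} (h : 1 ≤ |(N:ℝ) * (t:ℝ) - (k:ℝ)|) :
    hat N k t = 0 := by
  simp only [hat, ContinuousMap.coe_mk]
  exact max_eq_left (by linarith)

lemma sum_hat (N : ℕ) (hN : 1 ≤ N) (t : Set.Icc (0:ℝ) 1) :
    ∑ k ∈ Finset.range (N + 1), hat N k t = 1 := by
  obtain ⟨t, ht0, ht1⟩ := t
  set s : ℝ := (N:ℝ) * t with hs
  have hs0 : 0 ≤ s := mul_nonneg (Nat.cast_nonneg _) ht0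
  have hsN : s ≤ N := by
    calc s ≤ (N:ℝ) * 1 := by apply mul_le_mul_of_nonneg_left ht1 (Nat.cast_nonneg _)
    _ = N := mul_one _
  set j : ℕ := min (⌊s⌋.toNat) (N - 1) with hj
  have hfl : (0:ℤ) ≤ ⌊s⌋ := Int.floor_nonneg.2 hs0
  have hcast : ((⌊s⌋.toNat : ℕ) : ℝ) = ((⌊s⌋ : ℤ) : ℝ) := by
    exact_mod_cast congrArg (fun z : ℤ => (z : ℝ)) (Int.toNat_of_nonneg hfl)
  have hflval : ((⌊s⌋.toNat : ℕ) : ℝ) ≤ s := by rw [hcast]; exact Int.floor_le s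
  have hflval2 : s < (⌊s⌋.toNat : ℝ) + 1 := by rw [hcast]; exact Int.lt_floor_add_one s
  have hj1 : (j:ℝ) ≤ s :=
    le_trans (by exact_mod_cast Nat.cast_le.mpr (min_le_left _ _)) hflval
  have hj3 : j + 1 ≤ N := by
    have := min_le_right (⌊s⌋.toNat) (N - 1); omega
  have hj2 : s ≤ (j:ℝ) + 1 := by
    rcases le_or_gt (⌊s⌋.toNat) (N-1) with h | h
    · rw [hj, min_eq_left h]; exact le_of_lt hflval2
    · have hjN : j = N - 1 := by rw [hj, min_eq_right (le_of_lt h)]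
      have h2 : ((N:ℝ)) ≤ (⌊s⌋.toNat : ℝ) := by exact_mod_cast Nat.cast_le (α := ℝ) |>.mpr (by omega)
      have hNc : ((N - 1 : ℕ) : ℝ) = (N:ℝ) - 1 := by
        have h1 : (1:ℕ) ≤ N := hN
        push_cast [h1]; ring
      rw [hjN, hNc]; linarith
  clear_value j
  clear hj
  have hzero : ∀ k ∈ Finset.range (N+1), k ∉ ({j, j+1} : Finset ℕ) → hat N k ⟨t, ht0, ht1⟩ = 0 := by
    intro k hk hk'
    simp only [Finset.mem_insert, Finset.mem_singleton] at hk'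
    push_neg at hk'
    apply hat_eq_zero
    rcases lt_or_gt_of_ne hk'.1 with h | h
    · have hk1 : k + 1 ≤ j := by omega
      have hk1' : (k:ℝ) + 1 ≤ (j:ℝ) := by exact_mod_cast hk1
      rw [abs_of_nonneg (by linarith)]
      linarith
    · have hk2 : j + 2 ≤ k := by omega
      have hk2' : (j:ℝ) + 2 ≤ (k:ℝ) := by exact_mod_cast hk2
      rw [abs_of_nonpos (by linarith)]
      linarith
  have hsub : ({j, j+1} : Finset ℕ) ⊆ Finset.range (N+1) := by
    intro k hk
    simp only [Finset.mem_insert, Finset.mem_singleton] at hk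
    simp only [Finset.mem_range]
    omega
  rw [← Finset.sum_subset hsub hzero, Finset.sum_pair (by omega : j ≠ j + 1)]
  have h1 : hat N j ⟨t, ht0, ht1⟩ = 1 - (s - j) := by
    simp only [hat, ContinuousMap.coe_mk, ← hs]
    rw [abs_of_nonneg (by linarith)]
    exact max_eq_right (by linarith)
  have h2 : hat N (j+1) ⟨t, ht0, ht1⟩ = 1 - ((j:ℝ) + 1 - s) := by
    simp only [hat, ContinuousMap.coe_mk, ← hs]
    have hc : ((j + 1 : ℕ) : ℝ) = (j:ℝ) + 1 := by push_cast; ring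
    rw [hc, abs_of_nonpos (sub_nonpos.mpr hj2), max_eq_right (by linarith)]
    ring
  rw [h1, h2]; ring

def lo (N k : ℕ) : ℝ := ((k - 1 : ℕ) : ℝ) / N

def Sset (N k : ℕ) : Set (Set.Icc (0:ℝ) 1) :=
  Subtype.val ⁻¹' Set.Icc (lo N k) (lo N k + 1 / N)

lemma measurableSet_Sset (N k : ℕ) : MeasurableSet (Sset N k) :=
  measurableSet_Icc.preimage measurable_subtype_coe

lemma Icc_subset {N k : ℕ} (hN : 1 ≤ N) (hk : k ≤ N) :
    Set.Icc (lo N k) (lo N k + 1 / N) ⊆ Set.Icc (0:ℝ) 1 := by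
  apply Set.Icc_subset_Icc
  · exact div_nonneg (Nat.cast_nonneg _) (Nat.cast_nonneg _)
  · have hNpos : (0:ℝ) < N := by exact_mod_cast hN
    rw [lo, ← add_div, div_le_one hNpos]
    have : (k - 1 : ℕ) + 1 ≤ N := by omega
    exact_mod_cast this

lemma volume_Sset {N k : ℕ} (hN : 1 ≤ N) (hk : k ≤ N) :
    (volume : Measure (Set.Icc (0:ℝ) 1)) (Sset N k) = ENNReal.ofReal (1 / N) := by
  have h0 : (volume : Measure (Set.Icc (0:ℝ) 1)) = volume.comap Subtype.val := rfl
  rw [h0, Sset, (MeasurableEmbedding.subtype_coe measurableSet_Icc).comap_apply,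
    Subtype.image_preimage_coe, Set.inter_eq_right.mpr (Icc_subset hN hk), Real.volume_Icc]
  congr 1
  ring

lemma volume_Sset_ne_top {N k : ℕ} (hN : 1 ≤ N) (hk : k ≤ N) :
    (volume : Measure (Set.Icc (0:ℝ) 1)) (Sset N k) ≠ ⊤ := by
  rw [volume_Sset hN hk]; exact ENNReal.ofReal_ne_top

lemma volume_Sset_toReal {N k : ℕ} (hN : 1 ≤ N) (hk : k ≤ N) :
    ((volume : Measure (Set.Icc (0:ℝ) 1)) (Sset N k)).toReal = 1 / N := by
  rw [volume_Sset hN hk, ENNReal.toReal_ofReal]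
  positivity

/-- distance of points of `Sset N k` from `k / N` is at most `1 / N`. -/
lemma abs_le_of_mem_Sset {N k : ℕ} (hN : 1 ≤ N) (hk : k ≤ N) {u : Set.Icc (0:ℝ) 1}
    (hu : u ∈ Sset N k) : |(u : ℝ) - (k : ℝ) / N| ≤ 1 / N := by
  have hNpos : (0:ℝ) < N := by exact_mod_cast hN
  obtain ⟨h1, h2⟩ := hu
  rw [abs_le]
  have hlo : (k:ℝ) / N - 1 / N ≤ lo N k := by
    rw [lo, div_sub_div_same, div_le_div_iff_of_pos_right hNpos]
    have : (k:ℝ) - 1 ≤ ((k - 1 : ℕ) : ℝ) := by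
      rcases Nat.eq_zero_or_pos k with h | h
      · subst h; simp
      · have : ((k - 1 : ℕ) : ℝ) = (k:ℝ) - 1 := by
          have : (1:ℕ) ≤ k := h
          push_cast [this]; ring
        linarith
    linarith
  have hhi : lo N k + 1 / N ≤ (k:ℝ) / N + 1 / N := by
    have : lo N k ≤ (k:ℝ) / N := by
      rw [lo, div_le_div_iff_of_pos_right hNpos]
      exact_mod_cast Nat.cast_le.mpr (Nat.sub_le k 1)
    linarith
  constructor <;> [linarith; linarith]


instance : IsProbabilityMeasure (volume : Measure (Set.Icc (0:ℝ) 1)) := by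
  constructor
  rw [MeasureTheory.Measure.Subtype.volume_univ measurableSet_Icc.nullMeasurableSet,
    Real.volume_Icc]
  simp

/-- indicator elements of `H`. -/
def g (N k : ℕ) : H :=
  indicatorConstLp 2 (measurableSet_Sset N k) (measure_ne_top _ _) ((N:ℝ))

lemma inner_g (N k : ℕ) (y : H) :
    (inner ℝ (g N k) y : ℝ) = ∫ u in Sset N k, (N:ℝ) * y u := by
  rw [g, L2.inner_indicatorConstLp_eq_setIntegral_inner ℝ y (measurableSet_Sset N k) _ _]
  simp only [Real.inner_apply]

lemma integrable_comp (x : E) :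
    Integrable (fun u : Set.Icc (0:ℝ) 1 => x u) (volume : Measure (Set.Icc (0:ℝ) 1)) := by
  refine Integrable.mono' (integrable_const ‖x‖) x.continuous.aestronglyMeasurable
    (Filter.Eventually.of_forall fun u => ?_)
  exact x.norm_coe_le_norm u

lemma avg_close {N k : ℕ} (hN : 1 ≤ N) (hk : k ≤ N) (x : E) (t : Set.Icc (0:ℝ) 1) {ε : ℝ}
    (h : ∀ u ∈ Sset N k, |x u - x t| ≤ ε) :
    |(inner ℝ (g N k) (iota x) : ℝ) - x t| ≤ ε := by
  have hNpos : (0:ℝ) < N := by exact_mod_cast hN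
  have hε : 0 ≤ ε := le_trans (abs_nonneg _) (h ⟨(k:ℝ)/N, by
      constructor
      · positivity
      · rw [div_le_one hNpos]; exact_mod_cast hk⟩
    (by
      constructor
      · rw [lo, div_le_div_iff_of_pos_right hNpos]
        exact_mod_cast Nat.cast_le.mpr (Nat.sub_le k 1)
      · rw [lo, ← add_div, div_le_div_iff_of_pos_right hNpos]
        have : k ≤ k - 1 + 1 := by omega
        exact_mod_cast this))
  have h1 : (inner ℝ (g N k) (iota x) : ℝ) = ∫ u in Sset N k, (N:ℝ) * x u := by
    rw [inner_g]
    refine setIntegral_congr_ae (measurableSet_Sset N k) ?_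
    filter_upwards [ContinuousMap.coeFn_toLp (p := 2) (μ := (volume : Measure (Set.Icc (0:ℝ) 1))) (𝕜 := ℝ) x] with u hu _
    rw [iota, hu]
  have hxint : IntegrableOn (fun u : Set.Icc (0:ℝ) 1 => (N:ℝ) * x u) (Sset N k) volume :=
    ((integrable_comp x).const_mul _).integrableOn
  have hconst : ∫ _ in Sset N k, ((N:ℝ) * x t) ∂(volume : Measure (Set.Icc (0:ℝ) 1))
      = (N:ℝ) * x t / N := by
    rw [setIntegral_const, measureReal_def, volume_Sset_toReal hN hk, smul_eq_mul]
    ring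
  have h2 : (inner ℝ (g N k) (iota x) : ℝ) - x t
      = ∫ u in Sset N k, ((N:ℝ) * x u - (N:ℝ) * x t) := by
    rw [integral_sub hxint (integrableOn_const (volume_Sset_ne_top hN hk)), h1, hconst]
    field_simp
  rw [h2]
  have hb : |∫ u in Sset N k, ((N:ℝ) * x u - (N:ℝ) * x t)| ≤ ((N:ℝ) * ε) * ((volume : Measure (Set.Icc (0:ℝ) 1)) (Sset N k)).toReal := by
    rw [← Real.norm_eq_abs]
    refine norm_setIntegral_le_of_norm_le_const ((volume_Sset hN hk) ▸ ENNReal.ofReal_lt_top)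
      fun u hu => ?_
    rw [Real.norm_eq_abs, ← mul_sub, abs_mul, abs_of_nonneg (le_of_lt hNpos)]
    exact mul_le_mul_of_nonneg_left (h u hu) (le_of_lt hNpos)
  rw [volume_Sset_toReal hN hk] at hb
  calc |∫ u in Sset N k, ((N:ℝ) * x u - (N:ℝ) * x t)| ≤ (N:ℝ) * ε * (1 / N) := hb
  _ = ε := by field_simp


lemma hat_ne_zero_dist {N k : ℕ} (hN : 1 ≤ N) {t : Set.Icc (0:ℝ) 1}
    (h : hat N k t ≠ 0) : |(t:ℝ) - (k:ℝ)/N| < 1/N := by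
  have hNpos : (0:ℝ) < N := by exact_mod_cast hN
  by_contra hc
  push_neg at hc
  apply h
  apply hat_eq_zero
  have : (N:ℝ) * (t:ℝ) - (k:ℝ) = (N:ℝ) * ((t:ℝ) - (k:ℝ)/N) := by field_simp
  rw [this, abs_mul, abs_of_pos hNpos]
  calc (1:ℝ) = (N:ℝ) * (1/N) := by field_simp
  _ ≤ (N:ℝ) * |(t:ℝ) - (k:ℝ)/N| := by
      exact mul_le_mul_of_nonneg_left hc (le_of_lt hNpos)

/-- The finite-rank approximation operator `H →L E`. -/
def proj (n : ℕ) : H →L[ℝ] E :=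
  ∑ k ∈ Finset.range (n + 2), ((innerSL ℝ (g (n+1) k)).smulRight (hat (n+1) k))

lemma proj_apply (n : ℕ) (y : H) (t : Set.Icc (0:ℝ) 1) :
    proj n y t = ∑ k ∈ Finset.range (n + 2), (inner ℝ (g (n+1) k) y : ℝ) * hat (n+1) k t := by
  rw [proj]
  rw [ContinuousLinearMap.sum_apply]
  rw [ContinuousMap.coe_sum, Finset.sum_apply]
  refine Finset.sum_congr rfl fun k _ => ?_
  rw [ContinuousLinearMap.smulRight_apply, ContinuousMap.smul_apply, innerSL_apply_apply]
  rfl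

lemma proj_pointwise {n : ℕ} (x : E) {δ ε2 : ℝ} (hδ : 0 < δ)
    (hmod : ∀ u v : Set.Icc (0:ℝ) 1, |(u:ℝ) - (v:ℝ)| < δ → |x u - x v| ≤ ε2)
    (hn : 2 / ((n:ℝ) + 1) < δ) (t : Set.Icc (0:ℝ) 1) :
    |proj n (iota x) t - x t| ≤ ε2 := by
  set N := n + 1 with hNdef
  have hN : 1 ≤ N := by omega
  have hNpos : (0:ℝ) < N := by exact_mod_cast hN
  have hNcast : ((N:ℕ):ℝ) = (n:ℝ) + 1 := by simp [hNdef]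
  have hxt : x t = ∑ k ∈ Finset.range (N + 1), hat N k t * x t := by
    rw [← Finset.sum_mul, sum_hat N hN t, one_mul]
  rw [proj_apply]
  have hre : (n : ℕ) + 2 = N + 1 := by omega
  rw [hre]
  calc |(∑ k ∈ Finset.range (N+1), (inner ℝ (g N k) (iota x) : ℝ) * hat N k t) - x t|
      = |∑ k ∈ Finset.range (N+1), hat N k t * ((inner ℝ (g N k) (iota x) : ℝ) - x t)| := by
        have key : ∑ k ∈ Finset.range (N+1), hat N k t * ((inner ℝ (g N k) (iota x) : ℝ) - x t)
            = (∑ k ∈ Finset.range (N+1), (inner ℝ (g N k) (iota x) : ℝ) * hat N k t) - x t := by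
          rw [Finset.sum_congr rfl (fun k _ => mul_sub (hat N k t) _ _),
            Finset.sum_sub_distrib, ← Finset.sum_mul, sum_hat N hN t, one_mul,
            Finset.sum_congr rfl (fun k _ => mul_comm (hat N k t) _)]
        rw [key]
  _ ≤ ∑ k ∈ Finset.range (N+1), |hat N k t * ((inner ℝ (g N k) (iota x) : ℝ) - x t)| :=
        Finset.abs_sum_le_sum_abs _ _
  _ ≤ ∑ k ∈ Finset.range (N+1), hat N k t * ε2 := by
        refine Finset.sum_le_sum fun k hk => ?_
        have hkN : k ≤ N := by
          simp only [Finset.mem_range] at hk; omega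
        rw [abs_mul, abs_of_nonneg (hat_nonneg N k t)]
        rcases eq_or_ne (hat N k t) 0 with h0 | h0
        · rw [h0]; simp
        · refine mul_le_mul_of_nonneg_left ?_ (hat_nonneg N k t)
          refine avg_close hN hkN x t fun u hu => ?_
          refine hmod u t ?_
          have h1 : |(u:ℝ) - (k:ℝ)/N| ≤ 1/N := abs_le_of_mem_Sset hN hkN hu
          have h2 : |(t:ℝ) - (k:ℝ)/N| < 1/N := hat_ne_zero_dist hN h0
          have h3 : 2/(N:ℝ) < δ := by rw [hNcast]; exact hn
          calc |(u:ℝ) - (t:ℝ)| ≤ |(u:ℝ) - (k:ℝ)/N| + |(k:ℝ)/N - (t:ℝ)| :=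
                abs_sub_le _ _ _
          _ = |(u:ℝ) - (k:ℝ)/N| + |(t:ℝ) - (k:ℝ)/N| := by rw [abs_sub_comm ((k:ℝ)/N) (t:ℝ)]
          _ < 1/N + 1/N := by linarith
          _ = 2/(N:ℝ) := by ring
          _ < δ := h3
  _ = ε2 := by rw [← Finset.sum_mul, sum_hat N hN t, one_mul]

lemma tendsto_proj (x : E) : Tendsto (fun n => proj n (iota x)) atTop (nhds x) := by
  rw [Metric.tendsto_atTop]
  intro ε hε
  have hucont : UniformContinuous (fun t : Set.Icc (0:ℝ) 1 => x t) :=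
    CompactSpace.uniformContinuous_of_continuous x.continuous
  rw [Metric.uniformContinuous_iff] at hucont
  obtain ⟨δ, hδ, hmod⟩ := hucont (ε/2) (by linarith)
  obtain ⟨M, hM⟩ := exists_nat_gt (2/δ)
  refine ⟨M, fun n hn => ?_⟩
  have h2 : 2 / ((n:ℝ) + 1) < δ := by
    rw [div_lt_iff₀ (by positivity)]
    rw [div_lt_iff₀ hδ] at hM
    have h4 : M ≤ n + 1 := by omega
    have : (M:ℝ) ≤ (n:ℝ) + 1 := by exact_mod_cast h4
    nlinarith
  have hb : ∀ t : Set.Icc (0:ℝ) 1, |proj n (iota x) t - x t| ≤ ε/2 := by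
    intro t
    refine proj_pointwise x hδ (fun u v huv => ?_) h2 t
    have := hmod (show dist u v < δ by rwa [Subtype.dist_eq, Real.dist_eq])
    rw [Real.dist_eq] at this
    exact le_of_lt this
  rw [dist_eq_norm]
  have : ‖proj n (iota x) - x‖ ≤ ε/2 := by
    refine (ContinuousMap.norm_le _ (by linarith)).mpr fun t => ?_
    rw [ContinuousMap.sub_apply, Real.norm_eq_abs]
    exact hb t
  linarith

end S3

/-- `φ ∈ C¹_b(X)`: `φ` is continuously Fréchet differentiable, bounded, with bounded
derivative. -/
def IsC1b {X : Type*} [NormedAddCommGroup X] [NormedSpace ℝ X] (φ : X → ℝ) : Prop :=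
  ContDiff ℝ 1 φ ∧ (∃ C, ∀ x, |φ x| ≤ C) ∧ (∃ C, ∀ x, ‖fderiv ℝ φ x‖ ≤ C)

/-- Every `φ ∈ C¹_b(E)` can be approximated by a sequence `(φ_n) ⊆ C¹_b(H)`
pointwise along `ι`, together with its directional derivatives, with uniform bounds. -/
theorem exists_C1b_approximation_on_H (φ : E → ℝ) (hφ : IsC1b φ) :
    ∃ φn : ℕ → H → ℝ, (∀ n, IsC1b (φn n)) ∧
      (∀ n y, |φn n y| ≤ ⨆ x : E, |φ x|) ∧
      (∀ x : E, Tendsto (fun n => φn n (iota x)) atTop (nhds (φ x))) ∧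
      (∀ x z : E,
        Tendsto (fun n => fderiv ℝ (φn n) (iota x) (iota z)) atTop (nhds (fderiv ℝ φ x z))) ∧
      (∀ z : E, ∃ C : ℝ, ∀ n y, |fderiv ℝ (φn n) y (iota z)| ≤ C) := by
  obtain ⟨hsmooth, ⟨C0, hC0⟩, ⟨C1, hC1⟩⟩ := hφ
  have hC1nn : 0 ≤ C1 := le_trans (norm_nonneg _) (hC1 (S3.proj 0 0))
  have hdiff : Differentiable ℝ φ := hsmooth.differentiable one_ne_zero
  have hd : ∀ (n : ℕ) (y : H), fderiv ℝ (fun w => φ (S3.proj n w)) y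
      = (fderiv ℝ φ (S3.proj n y)).comp (S3.proj n : H →L[ℝ] E) := by
    intro n y
    have h := fderiv_comp (𝕜 := ℝ) (x := y) (hdiff.differentiableAt) ((S3.proj n).differentiableAt)
    rw [(S3.proj n).fderiv] at h
    exact h
  refine ⟨fun n y => φ (S3.proj n y), fun n => ?_, fun n y => ?_, fun x => ?_, fun x z => ?_,
    fun z => ?_⟩
  · refine ⟨hsmooth.comp (S3.proj n).contDiff, ⟨C0, fun y => hC0 _⟩,
      ⟨C1 * ‖(S3.proj n : H →L[ℝ] E)‖, fun y => ?_⟩⟩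
    rw [hd n y]
    calc ‖(fderiv ℝ φ (S3.proj n y)).comp (S3.proj n : H →L[ℝ] E)‖
        ≤ ‖fderiv ℝ φ (S3.proj n y)‖ * ‖(S3.proj n : H →L[ℝ] E)‖ :=
          ContinuousLinearMap.opNorm_comp_le _ _
    _ ≤ C1 * ‖(S3.proj n : H →L[ℝ] E)‖ :=
          mul_le_mul_of_nonneg_right (hC1 _) (norm_nonneg (S3.proj n : H →L[ℝ] E))
  · exact le_ciSup ⟨C0, by rintro _ ⟨w, rfl⟩; exact hC0 w⟩ (S3.proj n y)
  · exact (hsmooth.continuous.tendsto x).comp (S3.tendsto_proj x)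
  · have hDcont : Continuous (fderiv ℝ φ) := hsmooth.continuous_fderiv one_ne_zero
    have h1 : Tendsto (fun n => fderiv ℝ φ (S3.proj n (iota x))) atTop (nhds (fderiv ℝ φ x)) :=
      (hDcont.tendsto x).comp (S3.tendsto_proj x)
    have h2 : Tendsto (fun n => S3.proj n (iota z)) atTop (nhds z) := S3.tendsto_proj z
    have h3 := (isBoundedBilinearMap_apply.continuous.tendsto (fderiv ℝ φ x, z)).comp
      (h1.prodMk_nhds h2)
    simp only [hd, ContinuousLinearMap.comp_apply]
    exact h3
  · obtain ⟨M, hM⟩ := (S3.tendsto_proj z).norm.bddAbove_range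
    rw [mem_upperBounds] at hM
    refine ⟨C1 * M, fun n y => ?_⟩
    rw [hd n y, ← Real.norm_eq_abs]
    calc ‖(fderiv ℝ φ (S3.proj n y)).comp (S3.proj n : H →L[ℝ] E) (iota z)‖
        = ‖fderiv ℝ φ (S3.proj n y) (S3.proj n (iota z))‖ := by
          rw [ContinuousLinearMap.comp_apply]
    _ ≤ ‖fderiv ℝ φ (S3.proj n y)‖ * ‖S3.proj n (iota z)‖ :=
          ContinuousLinearMap.le_opNorm _ _
    _ ≤ C1 * M := by
        refine mul_le_mul (hC1 _) (hM _ ⟨n, rfl⟩) (norm_nonneg _) hC1nn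
end
end

section
/- Let H = L²(0,1), let E = C([0,1]) with the supremum norm, and let ι : E → H be the canonical continuous linear embedding. Let μ be a Borel probability measure on E and let ι_*μ denote its pushforward to H. Let z ∈ E and suppose w ∈ L¹(H, ι_*μ) satisfies ∫_H ⟨Dψ(y), ι z⟩_H (ι_*μ)(dy) = ∫_H ψ(y) w(y) (ι_*μ)(dy) for every ψ ∈ C¹_b(H). Then for every φ ∈ C¹_b(E): ∫_E Dφ(x)(z) μ(dx) = ∫_E φ(x) w(ι x) μ(dx). -/
open MeasureTheory Filter

noncomputable section

instance : MeasurableSpace E := borel E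
instance : BorelSpace E := ⟨rfl⟩
instance : MeasurableSpace H := borel H
instance : BorelSpace H := ⟨rfl⟩

open Topology
open scoped symmDiff ENNReal RealInnerProductSpace

lemma norm_indicatorConstLp_sub_le {α : Type*} [MeasurableSpace α] {μ : Measure α}
    {s t : Set α} (hs : MeasurableSet s) (ht : MeasurableSet t)
    (hμs : μ s ≠ ⊤) (hμt : μ t ≠ ⊤) (c : ℝ) :
    ‖indicatorConstLp 2 hs hμs c - indicatorConstLp 2 ht hμt c‖ ≤
      ‖c‖ * (μ (s ∆ t)).toReal ^ (1/(2:ℝ)) := by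
  have hst : MeasurableSet (s ∆ t) := hs.symmDiff ht
  have hμst : μ (s ∆ t) ≠ ⊤ := by
    refine ne_top_of_le_ne_top (?_ : μ s + μ t ≠ ⊤)
      ((measure_mono Set.symmDiff_subset_union).trans (measure_union_le s t))
    simp [ENNReal.add_ne_top, hμs, hμt]
  have key : ‖indicatorConstLp 2 hs hμs c - indicatorConstLp 2 ht hμt c‖ ≤
      ‖indicatorConstLp 2 hst hμst c‖ := by
    rw [Lp.norm_def, Lp.norm_def]
    refine ENNReal.toReal_mono (Lp.eLpNorm_ne_top _) ?_
    calc eLpNorm (⇑(indicatorConstLp 2 hs hμs c - indicatorConstLp 2 ht hμt c)) 2 μ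
        = eLpNorm (s.indicator (fun _ => c) - t.indicator (fun _ => c)) 2 μ := by
          apply eLpNorm_congr_ae
          filter_upwards [Lp.coeFn_sub (indicatorConstLp 2 hs hμs c) (indicatorConstLp 2 ht hμt c),
            indicatorConstLp_coeFn (p := 2) (hs := hs) (hμs := hμs) (c := c),
            indicatorConstLp_coeFn (p := 2) (hs := ht) (hμs := hμt) (c := c)] with x h1 h2 h3
          simp only [h1, Pi.sub_apply, h2, h3]
      _ ≤ eLpNorm ((s ∆ t).indicator (fun _ => c)) 2 μ := by
          apply eLpNorm_mono
          intro x
          by_cases hxs : x ∈ s <;> by_cases hxt : x ∈ t <;>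
            simp [Set.indicator_apply, hxs, hxt, Set.mem_symmDiff, Pi.sub_apply]
      _ = eLpNorm (⇑(indicatorConstLp 2 hst hμst c)) 2 μ :=
          (eLpNorm_congr_ae (indicatorConstLp_coeFn)).symm
  refine key.trans_eq ?_
  rw [norm_indicatorConstLp (by norm_num) (by norm_num)]
  norm_num
  left; rfl

def Sr (δ t : ℝ) : Set ℝ := Set.Icc ((1-δ)*t) ((1-δ)*t + δ)

def A (δ : ℝ) (t : Set.Icc (0:ℝ) 1) : Set (Set.Icc (0:ℝ) 1) := Subtype.val ⁻¹' Sr δ t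

lemma measA (δ : ℝ) (t : Set.Icc (0:ℝ) 1) : MeasurableSet (A δ t) :=
  measurable_subtype_coe measurableSet_Icc

lemma volA {δ : ℝ} (hδ : 0 < δ) (hδ1 : δ ≤ 1) (t : Set.Icc (0:ℝ) 1) :
    volume (A δ t) = ENNReal.ofReal δ := by
  have ht := t.2
  simp only [Set.mem_Icc] at ht
  have hsub : Sr δ t ⊆ Set.Icc (0:ℝ) 1 := by
    intro s hs
    simp only [Sr, Set.mem_Icc] at hs ⊢
    constructor
    · nlinarith [ht.1, ht.2]
    · nlinarith [ht.1, ht.2]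
  rw [A, Sr] at *
  rw [volume_preimage_coe nullMeasurableSet_Icc measurableSet_Icc,
    Set.inter_eq_self_of_subset_left hsub, Real.volume_Icc]
  ring_nf

lemma volA_ne_top {δ : ℝ} (hδ : 0 < δ) (hδ1 : δ ≤ 1) (t : Set.Icc (0:ℝ) 1) :
    volume (A δ t) ≠ ⊤ := by rw [volA hδ hδ1]; exact ENNReal.ofReal_ne_top

lemma Icc_symmDiff_subset (a b δ : ℝ) :
    (Set.Icc a (a+δ)) ∆ (Set.Icc b (b+δ)) ⊆
      Set.Icc (min a b) (max a b) ∪ Set.Icc (min a b + δ) (max a b + δ) := by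
  intro x hx
  rw [Set.mem_symmDiff] at hx
  have h1 := min_le_left a b; have h2 := min_le_right a b
  have h3 := le_max_left a b; have h4 := le_max_right a b
  rcases hx with ⟨hmem, hnot⟩ | ⟨hmem, hnot⟩ <;>
    simp only [Set.mem_Icc, not_and, not_le] at hmem hnot <;>
    rcases hmem with ⟨ha, hb⟩
  · by_cases hbx : b ≤ x
    · right; exact Set.mem_Icc.2 ⟨by linarith [hnot hbx], by linarith⟩
    · left; exact Set.mem_Icc.2 ⟨by linarith, by linarith [not_le.mp hbx]⟩
  · by_cases hax : a ≤ x
    · right; exact Set.mem_Icc.2 ⟨by linarith [hnot hax], by linarith⟩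
    · left; exact Set.mem_Icc.2 ⟨by linarith, by linarith [not_le.mp hax]⟩

lemma volA_symmDiff {δ : ℝ} (hδ : 0 < δ) (hδ1 : δ ≤ 1) (t t' : Set.Icc (0:ℝ) 1) :
    volume (A δ t ∆ A δ t') ≤ ENNReal.ofReal (2 * dist t t') := by
  have hmeas : MeasurableSet (Sr δ (t:ℝ) ∆ Sr δ (t':ℝ)) :=
    measurableSet_Icc.symmDiff measurableSet_Icc
  have hAA : A δ t ∆ A δ t' = Subtype.val ⁻¹' (Sr δ t ∆ Sr δ t') := by
    rw [A, A, Set.preimage_symmDiff]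
  rw [hAA, volume_preimage_coe nullMeasurableSet_Icc hmeas]
  refine le_trans (measure_mono Set.inter_subset_left) ?_
  set a := (1-δ)*(t:ℝ) with ha_def; set b := (1-δ)*(t':ℝ) with hb_def
  refine le_trans (measure_mono (Icc_symmDiff_subset a b δ)) ?_
  refine le_trans (measure_union_le _ _) ?_
  rw [Real.volume_Icc, Real.volume_Icc]
  have habs : max a b - min a b ≤ dist t t' := by
    rw [max_sub_min_eq_abs, Subtype.dist_eq, Real.dist_eq]
    have hab : a - b = (1-δ)*((t:ℝ) - (t':ℝ)) := by rw [ha_def, hb_def]; ring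
    rw [abs_sub_comm, hab, abs_mul]
    have h1 : |1-δ| ≤ 1 := by rw [abs_of_nonneg (by linarith)]; linarith
    nlinarith [abs_nonneg ((t:ℝ) - (t':ℝ))]
  calc ENNReal.ofReal (max a b - min a b) + ENNReal.ofReal (max a b + δ - (min a b + δ))
      ≤ ENNReal.ofReal (dist t t') + ENNReal.ofReal (dist t t') := by
        gcongr <;> linarith
    _ = ENNReal.ofReal (2 * dist t t') := by
        rw [← ENNReal.ofReal_add dist_nonneg dist_nonneg]; ring_nf

/-- The averaging kernel as an element of `H`. -/
def kern (δ : ℝ) (hδ : 0 < δ) (hδ1 : δ ≤ 1) (t : Set.Icc (0:ℝ) 1) : H :=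
  indicatorConstLp 2 (measA δ t) (volA_ne_top hδ hδ1 t) (δ⁻¹ : ℝ)

lemma norm_kern_le {δ : ℝ} (hδ : 0 < δ) (hδ1 : δ ≤ 1) (t : Set.Icc (0:ℝ) 1) :
    ‖kern δ hδ hδ1 t‖ ≤ δ⁻¹ := by
  rw [kern, norm_indicatorConstLp (by norm_num) (by norm_num), measureReal_def, volA hδ hδ1,
    ENNReal.toReal_ofReal hδ.le]
  have h2 : ((2:ℝ≥0∞)).toReal = 2 := by norm_num
  rw [h2]
  have : δ ^ (1/(2:ℝ)) ≤ 1 := Real.rpow_le_one hδ.le hδ1 (by norm_num)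
  calc ‖δ⁻¹‖ * δ ^ (1/(2:ℝ)) ≤ ‖δ⁻¹‖ * 1 := by gcongr
    _ = δ⁻¹ := by rw [mul_one, Real.norm_eq_abs, abs_of_pos (by positivity)]

lemma continuous_kern {δ : ℝ} (hδ : 0 < δ) (hδ1 : δ ≤ 1) :
    Continuous (kern δ hδ hδ1) := by
  rw [Metric.continuous_iff]
  intro t ε hε
  refine ⟨(δ * ε / 2)^2 / 2, by positivity, fun t' ht' => ?_⟩
  have hbound : dist (kern δ hδ hδ1 t') (kern δ hδ hδ1 t) ≤
      ‖(δ⁻¹ : ℝ)‖ * (volume (A δ t' ∆ A δ t)).toReal ^ (1/(2:ℝ)) := by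
    rw [dist_eq_norm]
    exact norm_indicatorConstLp_sub_le _ _ _ _ _
  have hvol : (volume (A δ t' ∆ A δ t)).toReal ≤ 2 * dist t' t := by
    refine le_trans (ENNReal.toReal_mono ENNReal.ofReal_ne_top (volA_symmDiff hδ hδ1 t' t)) ?_
    rw [ENNReal.toReal_ofReal (by positivity)]
  have h2d : 2 * dist t' t < (δ * ε / 2)^2 := by linarith
  have hrpow : (volume (A δ t' ∆ A δ t)).toReal ^ (1/(2:ℝ)) < δ * ε / 2 := by
    have h1 : (volume (A δ t' ∆ A δ t)).toReal ^ (1/(2:ℝ)) ≤ (2 * dist t' t) ^ (1/(2:ℝ)) :=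
      Real.rpow_le_rpow ENNReal.toReal_nonneg hvol (by norm_num)
    refine lt_of_le_of_lt h1 ?_
    have h3 : ((δ * ε / 2)^2 : ℝ) ^ (1/(2:ℝ)) = δ * ε / 2 := by
      rw [← Real.rpow_natCast (δ * ε / 2) 2, ← Real.rpow_mul (by positivity)]
      norm_num
    calc (2 * dist t' t) ^ (1/(2:ℝ)) < ((δ * ε / 2)^2) ^ (1/(2:ℝ)) :=
          Real.rpow_lt_rpow (by positivity) h2d (by norm_num)
      _ = δ * ε / 2 := h3
  calc dist (kern δ hδ hδ1 t') (kern δ hδ hδ1 t)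
      ≤ ‖(δ⁻¹ : ℝ)‖ * (volume (A δ t' ∆ A δ t)).toReal ^ (1/(2:ℝ)) := hbound
    _ < ‖(δ⁻¹ : ℝ)‖ * (δ * ε / 2) := by
        refine mul_lt_mul_of_pos_left hrpow ?_
        rw [Real.norm_eq_abs]; positivity
    _ ≤ ε := by
        rw [Real.norm_eq_abs, abs_of_pos (by positivity)]
        rw [inv_mul_eq_div]
        rw [div_le_iff₀ hδ]
        nlinarith

/-- The averaging operator `H →L[ℝ] E`. -/
def Tlin (δ : ℝ) (hδ : 0 < δ) (hδ1 : δ ≤ 1) : H →L[ℝ] E :=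
  LinearMap.mkContinuous
    { toFun := fun y => ⟨fun t => ⟪kern δ hδ hδ1 t, y⟫,
        (continuous_kern hδ hδ1).inner continuous_const⟩
      map_add' := fun y y' => ContinuousMap.ext fun t => by
        show ⟪kern δ hδ hδ1 t, y + y'⟫ = ⟪kern δ hδ hδ1 t, y⟫ + ⟪kern δ hδ hδ1 t, y'⟫
        exact inner_add_right _ _ _
      map_smul' := fun c y => ContinuousMap.ext fun t => by
        show ⟪kern δ hδ hδ1 t, c • y⟫ = c • ⟪kern δ hδ hδ1 t, y⟫
        simp [inner_smul_right] }
    δ⁻¹ (fun y => by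
      rw [LinearMap.coe_mk, AddHom.coe_mk]
      refine (ContinuousMap.norm_le _ (by positivity)).2 fun t => ?_
      calc ‖⟪kern δ hδ hδ1 t, y⟫‖ ≤ ‖kern δ hδ hδ1 t‖ * ‖y‖ := norm_inner_le_norm _ _
        _ ≤ δ⁻¹ * ‖y‖ := by gcongr; exact norm_kern_le hδ hδ1 t)

lemma Tlin_apply {δ : ℝ} (hδ : 0 < δ) (hδ1 : δ ≤ 1) (y : H) (t : Set.Icc (0:ℝ) 1) :
    Tlin δ hδ hδ1 y t = ⟪kern δ hδ hδ1 t, y⟫ := by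
  rw [Tlin, LinearMap.mkContinuous_apply]
  rfl

lemma cont_integrable (x : E) : Integrable (fun s => x s) (volume : Measure (Set.Icc (0:ℝ) 1)) :=
  (BoundedContinuousFunction.mkOfCompact x).integrable _

lemma Tlin_iota_apply {δ : ℝ} (hδ : 0 < δ) (hδ1 : δ ≤ 1) (x : E) (t : Set.Icc (0:ℝ) 1) :
    Tlin δ hδ hδ1 (iota x) t = δ⁻¹ * ∫ s in A δ t, x s ∂volume := by
  rw [Tlin_apply, kern,
    L2.inner_indicatorConstLp_eq_setIntegral_inner ℝ (iota x) (measA δ t) (δ⁻¹ : ℝ)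
      (volA_ne_top hδ hδ1 t)]
  have h1 : ∀ᵐ s ∂((volume : Measure (Set.Icc (0:ℝ) 1)).restrict (A δ t)),
      ⟪(δ⁻¹ : ℝ), (iota x : H) s⟫ = δ⁻¹ * x s := by
    refine ae_restrict_of_ae ?_
    filter_upwards [ContinuousMap.coeFn_toLp (p := 2)
      (μ := (volume : Measure (Set.Icc (0:ℝ) 1))) (𝕜 := ℝ) x] with s hs
    rw [RCLike.inner_apply, conj_trivial,
      show (iota x : H) = ContinuousMap.toLp 2 volume ℝ x from rfl, hs]
    exact mul_comm _ _
  rw [integral_congr_ae h1, integral_const_mul]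

lemma norm_Tlin_iota_le {δ : ℝ} (hδ : 0 < δ) (hδ1 : δ ≤ 1) (x : E) :
    ‖Tlin δ hδ hδ1 (iota x)‖ ≤ ‖x‖ := by
  refine (ContinuousMap.norm_le _ (norm_nonneg x)).2 fun t => ?_
  rw [Tlin_iota_apply hδ hδ1 x t]
  have hA : volume (A δ t) < ⊤ := lt_of_le_of_ne le_top (volA_ne_top hδ hδ1 t)
  have hint : ‖∫ s in A δ t, x s ∂volume‖ ≤ ‖x‖ * (volume (A δ t)).toReal := by
    refine norm_setIntegral_le_of_norm_le_const hA fun s _ => ?_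
    exact x.norm_coe_le_norm s
  rw [volA hδ hδ1, ENNReal.toReal_ofReal hδ.le] at hint
  calc ‖δ⁻¹ * ∫ s in A δ t, x s ∂volume‖ = δ⁻¹ * ‖∫ s in A δ t, x s ∂volume‖ := by
        rw [norm_mul, Real.norm_eq_abs (δ⁻¹), abs_of_pos (by positivity)]
    _ ≤ δ⁻¹ * (‖x‖ * δ) := by gcongr
    _ = ‖x‖ := by field_simp

def dd (n : ℕ) : ℝ := ((n:ℝ)+1)⁻¹
lemma dd_pos (n : ℕ) : 0 < dd n := by rw [dd]; positivity
lemma dd_le_one (n : ℕ) : dd n ≤ 1 := by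
  rw [dd]
  rw [inv_le_one_iff₀]
  right; linarith [Nat.cast_nonneg (α := ℝ) n]

/-- The mollifiers at scale `dd n`. -/
def TT (n : ℕ) : H →L[ℝ] E := Tlin (dd n) (dd_pos n) (dd_le_one n)

lemma mem_A_dist {δ : ℝ} (hδ : 0 < δ) (hδ1 : δ ≤ 1) {t s : Set.Icc (0:ℝ) 1}
    (hs : s ∈ A δ t) : dist s t ≤ δ := by
  have ht := t.2; have hs' := s.2
  simp only [Set.mem_Icc] at ht hs'
  simp only [A, Sr, Set.mem_preimage, Set.mem_Icc] at hs
  rw [Subtype.dist_eq, Real.dist_eq, abs_le]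
  constructor <;> nlinarith [ht.1, ht.2, hs.1, hs.2]

lemma TT_iota_tendsto (x : E) : Tendsto (fun n => TT n (iota x)) atTop (𝓝 x) := by
  rw [Metric.tendsto_atTop]
  intro ε hε
  -- uniform continuity of x
  have hux : UniformContinuous x := CompactSpace.uniformContinuous_of_continuous x.continuous
  rw [Metric.uniformContinuous_iff] at hux
  obtain ⟨η, hη, hmod⟩ := hux (ε/2) (by positivity)
  obtain ⟨N, hN⟩ := exists_nat_gt η⁻¹
  refine ⟨N, fun n hn => ?_⟩
  have hδη : dd n < η := by
    rw [dd]
    have h1 : (N:ℝ) < (n:ℝ) + 1 := by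
      have := Nat.cast_le (α := ℝ) |>.2 hn
      linarith
    have h2 : η⁻¹ < (n:ℝ)+1 := lt_trans hN h1
    exact (inv_lt_comm₀ (by positivity) hη).2 h2
  set δ := dd n with hδdef
  have hδ := dd_pos n; have hδ1 := dd_le_one n
  have key : ∀ t, dist (TT n (iota x) t) (x t) ≤ ε/2 := by
    intro t
    rw [TT, Tlin_iota_apply hδ hδ1 x t, Real.dist_eq]
    have hconst : ∫ _ in A δ t, x t ∂volume = δ * x t := by
      rw [setIntegral_const, measureReal_def, volA hδ hδ1, ENNReal.toReal_ofReal hδ.le, smul_eq_mul]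
    have hsub : ∫ s in A δ t, (x s - x t) ∂volume
        = (∫ s in A δ t, x s ∂volume) - δ * x t := by
      rw [integral_sub ((cont_integrable x).integrableOn) (integrableOn_const
        (volA_ne_top hδ hδ1 t)), hconst]
    have hkey : δ⁻¹ * (∫ s in A δ t, x s ∂volume) - x t
        = δ⁻¹ * ∫ s in A δ t, (x s - x t) ∂volume := by
      rw [hsub]; field_simp
      rw [sub_div, mul_div_cancel_left₀ _ (show δ ≠ 0 from hδ.ne')]
    rw [show δ⁻¹ * (∫ s in A δ t, x s ∂volume) - x t
        = δ⁻¹ * ∫ s in A δ t, (x s - x t) ∂volume from hkey]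
    have hbd : ‖∫ s in A δ t, (x s - x t) ∂volume‖ ≤ (ε/2) * (volume (A δ t)).toReal := by
      refine norm_setIntegral_le_of_norm_le_const (lt_of_le_of_ne le_top (volA_ne_top hδ hδ1 t))
        fun s hs => ?_
      have hd : dist s t ≤ δ := mem_A_dist hδ hδ1 hs
      have : dist (x s) (x t) < ε/2 := hmod (lt_of_le_of_lt hd hδη)
      rw [Real.dist_eq] at this
      rw [Real.norm_eq_abs]
      linarith
    rw [volA hδ hδ1, ENNReal.toReal_ofReal hδ.le] at hbd
    calc |δ⁻¹ * ∫ s in A δ t, (x s - x t) ∂volume|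
        = δ⁻¹ * |∫ s in A δ t, (x s - x t) ∂volume| := by
          rw [abs_mul, abs_of_pos (by positivity : (0:ℝ) < δ⁻¹)]
      _ ≤ δ⁻¹ * ((ε/2) * δ) := by
          gcongr
          rw [← Real.norm_eq_abs]; exact hbd
      _ = ε/2 := by field_simp; exact div_self hδ.ne'
  have : dist (TT n (iota x)) x ≤ ε/2 :=
    (ContinuousMap.dist_le (by positivity)).2 key
  linarith

lemma fderiv_comp_clm (φ : E → ℝ) (hφ : ContDiff ℝ 1 φ) (T : H →L[ℝ] E) (y : H) :
    fderiv ℝ (fun v => φ (T v)) y = (fderiv ℝ φ (T y)).comp T := by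
  rw [show (fun v => φ (T v)) = φ ∘ ⇑T from rfl,
    fderiv_comp y (hφ.differentiable one_ne_zero _) T.differentiableAt, T.fderiv]

lemma isC1b_comp {φ : E → ℝ} (hφ : IsC1b φ) (T : H →L[ℝ] E) : IsC1b (fun v => φ (T v)) := by
  obtain ⟨h1, ⟨C, hC⟩, ⟨C', hC'⟩⟩ := hφ
  refine ⟨h1.comp T.contDiff, ⟨C, fun y => hC _⟩, ⟨C' * ‖T‖, fun y => ?_⟩⟩
  rw [fderiv_comp_clm φ h1 T y]
  exact (ContinuousLinearMap.opNorm_comp_le _ _).trans (by gcongr; exact hC' _)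


/-- If `w ∈ L¹(H, ι_*μ)` is an integration-by-parts weight for `(ι_*μ, ι z)`
on `H`, then the integration-by-parts formula transfers to `E`:
`∫_E Dφ(x)(z) μ(dx) = ∫_E φ(x) w(ι x) μ(dx)` for every `φ ∈ C¹_b(E)`. -/
theorem integration_by_parts_transfer
    (μ : Measure E) [IsProbabilityMeasure μ] (z : E) (w : H → ℝ)
    (hw : Integrable w (μ.map iota))
    (hweight : ∀ ψ : H → ℝ, IsC1b ψ →
      ∫ y, fderiv ℝ ψ y (iota z) ∂(μ.map iota) = ∫ y, ψ y * w y ∂(μ.map iota))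
    (φ : E → ℝ) (hφ : IsC1b φ) :
    ∫ x, fderiv ℝ φ x z ∂μ = ∫ x, φ x * w (iota x) ∂μ := by
  obtain ⟨hφ1, ⟨Cφ, hCφ⟩, ⟨CD, hCD⟩⟩ := hφ
  have hι : AEMeasurable iota μ := iota.continuous.measurable.aemeasurable
  have hfc : Continuous (fderiv ℝ φ) := hφ1.continuous_fderiv one_ne_zero
  have hφc : Continuous φ := hφ1.continuous
  have hwι : Integrable (fun x => w (iota x)) μ := (integrable_map_measure hw.1 hι).1 hw
  have hCφ0 : 0 ≤ Cφ := (abs_nonneg (φ 0)).trans (hCφ 0)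
  have hCD0 : 0 ≤ CD := (norm_nonneg (fderiv ℝ φ 0)).trans (hCD 0)
  -- the identity at scale n
  have hn : ∀ n : ℕ, ∫ x, fderiv ℝ φ (TT n (iota x)) (TT n (iota z)) ∂μ
      = ∫ x, φ (TT n (iota x)) * w (iota x) ∂μ := by
    intro n
    have hψ := hweight (fun v => φ (TT n v))
      (isC1b_comp ⟨hφ1, ⟨Cφ, hCφ⟩, ⟨CD, hCD⟩⟩ (TT n))
    have h1 : (fun y : H => fderiv ℝ (fun v => φ (TT n v)) y (iota z))
        = fun y : H => fderiv ℝ φ (TT n y) (TT n (iota z)) := by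
      funext y
      rw [fderiv_comp_clm φ hφ1 (TT n) y]
      rfl
    rw [h1] at hψ
    have hmL : AEStronglyMeasurable (fun y : H => fderiv ℝ φ (TT n y) (TT n (iota z)))
        (μ.map iota) := by
      apply Continuous.aestronglyMeasurable
      exact isBoundedBilinearMap_apply.continuous.comp
        (((hfc.comp (TT n).continuous)).prodMk continuous_const)
    have hmR : AEStronglyMeasurable (fun y : H => φ (TT n y) * w y) (μ.map iota) :=
      ((hφc.comp (TT n).continuous).aestronglyMeasurable).mul hw.1
    rw [integral_map hι hmL, integral_map hι hmR] at hψ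
    exact hψ
  -- LHS limit
  have hL : Tendsto (fun n => ∫ x, fderiv ℝ φ (TT n (iota x)) (TT n (iota z)) ∂μ) atTop
      (𝓝 (∫ x, fderiv ℝ φ x z ∂μ)) := by
    refine tendsto_integral_of_dominated_convergence (fun _ => CD * ‖z‖) ?_ ?_ ?_ ?_
    · intro n
      apply Continuous.aestronglyMeasurable
      exact isBoundedBilinearMap_apply.continuous.comp
        (((hfc.comp ((TT n).continuous.comp iota.continuous)).prodMk continuous_const))
    · exact integrable_const _
    · intro n
      refine Eventually.of_forall fun x => ?_
      calc ‖fderiv ℝ φ (TT n (iota x)) (TT n (iota z))‖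
          ≤ ‖fderiv ℝ φ (TT n (iota x))‖ * ‖TT n (iota z)‖ :=
            ContinuousLinearMap.le_opNorm _ _
        _ ≤ CD * ‖z‖ := mul_le_mul (hCD _) (norm_Tlin_iota_le _ _ z) (norm_nonneg _) hCD0
    · refine Eventually.of_forall fun x => ?_
      have hx := TT_iota_tendsto x
      have hz := TT_iota_tendsto z
      have hpair : Tendsto (fun n => (fderiv ℝ φ (TT n (iota x)), TT n (iota z))) atTop
          (𝓝 (fderiv ℝ φ x, z)) := ((hfc.tendsto x).comp hx).prodMk_nhds hz
      exact (isBoundedBilinearMap_apply.continuous.tendsto (fderiv ℝ φ x, z)).comp hpair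
  -- RHS limit
  have hR : Tendsto (fun n => ∫ x, φ (TT n (iota x)) * w (iota x) ∂μ) atTop
      (𝓝 (∫ x, φ x * w (iota x) ∂μ)) := by
    refine tendsto_integral_of_dominated_convergence (fun x => Cφ * |w (iota x)|) ?_ ?_ ?_ ?_
    · intro n
      exact ((hφc.comp ((TT n).continuous.comp iota.continuous)).aestronglyMeasurable).mul
        hwι.aestronglyMeasurable
    · exact hwι.abs.const_mul Cφ
    · intro n
      refine Eventually.of_forall fun x => ?_
      rw [norm_mul, Real.norm_eq_abs, Real.norm_eq_abs]
      exact mul_le_mul (hCφ _) le_rfl (abs_nonneg _) hCφ0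
    · refine Eventually.of_forall fun x => ?_
      exact (((hφc.tendsto x).comp (TT_iota_tendsto x)).mul_const (w (iota x)))
  rw [funext hn] at hL
  exact tendsto_nhds_unique hL hR
end
end

section
/- Let H = L²(0,1), let E = C([0,1]) with the supremum norm, and let ι : E → H be the canonical continuous linear embedding. Let μ be a Borel probability measure on E and let ι_*μ denote its pushforward to H. Let z ∈ E and suppose w ∈ L¹(H, ι_*μ) satisfies ∫_H ⟨Dψ(y), ι z⟩_H (ι_*μ)(dy) = ∫_H ψ(y) w(y) (ι_*μ)(dy) for every ψ ∈ C¹_b(H). Then for all φ, ψ ∈ C¹_b(E): ∫_E Dφ(x)(z) ψ(x) μ(dx) = − ∫_E Dψ(x)(z) φ(x) μ(dx) + ∫_E φ(x) ψ(x) w(ι x) μ(dx). -/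
open MeasureTheory Filter

noncomputable section

namespace IBPAux
open Topology RealInnerProductSpace intervalIntegral


def NN (n : ℕ) : ℝ := n + 2

lemma two_le_NN (n : ℕ) : 2 ≤ NN n := by
  simp only [NN]
  have : (0:ℝ) ≤ n := Nat.cast_nonneg n
  linarith

lemma NN_pos (n : ℕ) : 0 < NN n := lt_of_lt_of_le two_pos (two_le_NN n)

/-- center of the tent -/
def cc (n : ℕ) (t : ℝ) : ℝ := 1 / NN n + t * (1 - 2 / NN n)

def tentFun (n : ℕ) (t s : ℝ) : ℝ := NN n * max 0 (1 - NN n * |s - cc n t|)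

lemma tentFun_nonneg (n t s) : 0 ≤ tentFun n t s :=
  mul_nonneg (NN_pos n).le (le_max_left _ _)

lemma tentFun_le (n t s) : tentFun n t s ≤ NN n := by
  have : max 0 (1 - NN n * |s - cc n t|) ≤ 1 := by
    apply max_le zero_le_one
    nlinarith [abs_nonneg (s - cc n t), NN_pos n]
  calc tentFun n t s ≤ NN n * 1 := mul_le_mul_of_nonneg_left this (NN_pos n).le
    _ = NN n := mul_one _

lemma tentFun_continuous (n : ℕ) (t : ℝ) : Continuous (tentFun n t) := by
  unfold tentFun; fun_prop

lemma cc_sub (n : ℕ) (t t' : ℝ) : |cc n t - cc n t'| ≤ |t - t'| := by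
  have h1 : cc n t - cc n t' = (t - t') * (1 - 2 / NN n) := by unfold cc; ring
  rw [h1, abs_mul]
  have h2 : |1 - 2 / NN n| ≤ 1 := by
    rw [abs_le]
    have hp := NN_pos n
    have hl := two_le_NN n
    constructor
    · have : 2 / NN n ≤ 1 := by rw [div_le_one hp]; linarith
      linarith
    · have : 0 ≤ 2 / NN n := by positivity
      linarith
  nlinarith [abs_nonneg (t - t')]

lemma tentFun_lip (n : ℕ) (t t' s : ℝ) :
    |tentFun n t s - tentFun n t' s| ≤ NN n ^ 2 * |t - t'| := by
  unfold tentFun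
  rw [← mul_sub, abs_mul, abs_of_nonneg (NN_pos n).le]
  have h1 : |max 0 (1 - NN n * |s - cc n t|) - max 0 (1 - NN n * |s - cc n t'|)|
      ≤ |(1 - NN n * |s - cc n t|) - (1 - NN n * |s - cc n t'|)| := by
    rw [max_comm 0 _, max_comm 0 _]
    exact abs_max_sub_max_le_abs _ _ _
  have h2 : |(1 - NN n * |s - cc n t|) - (1 - NN n * |s - cc n t'|)|
      = NN n * abs (|s - cc n t'| - |s - cc n t|)  := by
    rw [show (1 - NN n * |s - cc n t|) - (1 - NN n * |s - cc n t'|)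
        = NN n * (|s - cc n t'| - |s - cc n t|) by ring, abs_mul,
      abs_of_nonneg (NN_pos n).le]
  have h3 : abs (|s - cc n t'| - |s - cc n t|) ≤ |cc n t - cc n t'| := by
    have := abs_abs_sub_abs_le_abs_sub (s - cc n t') (s - cc n t)
    calc abs (|s - cc n t'| - |s - cc n t|) ≤ |(s - cc n t') - (s - cc n t)| := this
      _ = |cc n t - cc n t'| := by rw [show (s - cc n t') - (s - cc n t) = cc n t - cc n t' by ring]
  have h4 := cc_sub n t t'
  calc NN n * |max 0 (1 - NN n * |s - cc n t|) - max 0 (1 - NN n * |s - cc n t'|)|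
      ≤ NN n * (NN n * |t - t'|) := by
        apply mul_le_mul_of_nonneg_left _ (NN_pos n).le
        calc _ ≤ _ := h1
          _ = NN n * abs (|s - cc n t'| - |s - cc n t|) := h2
          _ ≤ NN n * |t - t'| :=
            mul_le_mul_of_nonneg_left (le_trans h3 h4) (NN_pos n).le
    _ = NN n ^ 2 * |t - t'| := by ring

lemma tentFun_support {n : ℕ} {t s : ℝ} (h : tentFun n t s ≠ 0) :
    |s - cc n t| ≤ 1 / NN n := by
  by_contra hc
  push_neg at hc
  apply h
  unfold tentFun
  have hle : 1 - NN n * |s - cc n t| ≤ 0 := by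
    have hp := NN_pos n
    rw [div_lt_iff₀ hp] at hc
    nlinarith
  rw [max_eq_left hle, mul_zero]

lemma cc_mem {n : ℕ} {t : ℝ} (ht : t ∈ Set.Icc (0:ℝ) 1) :
    1 / NN n ≤ cc n t ∧ cc n t + 1 / NN n ≤ 1 := by
  obtain ⟨ht0, ht1⟩ := ht
  have hp := NN_pos n
  have hl := two_le_NN n
  have h2 : 0 ≤ 1 - 2 / NN n := by
    have : 2 / NN n ≤ 1 := by rw [div_le_one hp]; linarith
    linarith
  constructor
  · unfold cc; nlinarith
  · unfold cc
    have ha : t * (1 - 2 / NN n) ≤ 1 - 2 / NN n := by nlinarith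
    have hb : 1 / NN n + 1 / NN n = 2 / NN n := by ring
    linarith

lemma cc_close {n : ℕ} {t : ℝ} (ht : t ∈ Set.Icc (0:ℝ) 1) : |cc n t - t| ≤ 2 / NN n := by
  obtain ⟨ht0, ht1⟩ := ht
  have hp := NN_pos n
  have h : cc n t - t = 1 / NN n - t * (2 / NN n) := by unfold cc; ring
  rw [h, abs_le]
  have h2 : 0 ≤ 2 / NN n := by positivity
  have h1 : (0:ℝ) ≤ 1 / NN n := by positivity
  have h3 : 2 / NN n = 1 / NN n + 1 / NN n := by ring
  have h4 : 0 ≤ t * (2 / NN n) := mul_nonneg ht0 h2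
  have h5 : t * (2 / NN n) ≤ 2 / NN n := by nlinarith
  constructor <;> linarith



lemma tent_integral_real (N c : ℝ) (hN : 0 < N) (h1 : 1/N ≤ c) (h2 : c + 1/N ≤ 1) :
    ∫ s in (0:ℝ)..1, N * max 0 (1 - N * |s - c|) = 1 := by
  set f : ℝ → ℝ := fun s => N * max 0 (1 - N * |s - c|) with hf
  have hcont : Continuous f := by unfold f; fun_prop
  have hint : ∀ u v : ℝ, IntervalIntegrable f volume u v := fun u v =>
    hcont.intervalIntegrable u v
  have h1N : (0:ℝ) < 1/N := by positivity
  have ha0 : 0 ≤ c - 1/N := by linarith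
  have hac : c - 1/N ≤ c := by linarith
  have hcb : c ≤ c + 1/N := by linarith
  have hb1 : c + 1/N ≤ 1 := h2
  have split1 : ∫ s in (0:ℝ)..1, f s
      = (∫ s in (0:ℝ)..(c - 1/N), f s) + (∫ s in (c - 1/N)..c, f s)
        + (∫ s in c..(c + 1/N), f s) + (∫ s in (c + 1/N)..1, f s) := by
    rw [integral_add_adjacent_intervals (hint _ _) (hint _ _),
        integral_add_adjacent_intervals (hint _ _) (hint _ _),
        integral_add_adjacent_intervals (hint _ _) (hint _ _)]
  have hzero1 : ∫ s in (0:ℝ)..(c - 1/N), f s = 0 := by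
    have he : ∫ s in (0:ℝ)..(c - 1/N), f s = ∫ s in (0:ℝ)..(c - 1/N), (0:ℝ) := by
      apply integral_congr
      intro s hs
      rw [Set.uIcc_of_le ha0] at hs
      have hs2 : s ≤ c - 1/N := hs.2
      have habs : 1/N ≤ |s - c| := by
        rw [abs_sub_comm, abs_of_nonneg (by linarith)]
        linarith
      have : 1 - N * |s - c| ≤ 0 := by
        have := mul_le_mul_of_nonneg_left habs hN.le
        rw [mul_one_div, div_self hN.ne'] at this
        linarith
      simp [hf, max_eq_left this]
    rw [he, intervalIntegral.integral_zero]
  have hzero2 : ∫ s in (c + 1/N)..1, f s = 0 := by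
    have he : ∫ s in (c + 1/N)..1, f s = ∫ s in (c + 1/N)..1, (0:ℝ) := by
      apply integral_congr
      intro s hs
      rw [Set.uIcc_of_le hb1] at hs
      have hs1 : c + 1/N ≤ s := hs.1
      have habs : 1/N ≤ |s - c| := by
        rw [abs_of_nonneg (by linarith)]; linarith
      have : 1 - N * |s - c| ≤ 0 := by
        have := mul_le_mul_of_nonneg_left habs hN.le
        rw [mul_one_div, div_self hN.ne'] at this
        linarith
      simp [hf, max_eq_left this]
    rw [he, intervalIntegral.integral_zero]
  have hmid1 : ∫ s in (c - 1/N)..c, f s = 1/2 := by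
    have hcongr : ∫ s in (c - 1/N)..c, f s = ∫ s in (c - 1/N)..c, (N - N^2*(c - s)) := by
      apply integral_congr
      intro s hs
      rw [Set.uIcc_of_le hac] at hs
      have habs : |s - c| = c - s := by
        rw [abs_sub_comm, abs_of_nonneg (by linarith [hs.2])]
      have hle : 0 ≤ 1 - N * |s - c| := by
        rw [habs]
        have h3 : c - s ≤ 1/N := by linarith [hs.1]
        have := mul_le_mul_of_nonneg_left h3 hN.le
        rw [mul_one_div, div_self hN.ne'] at this
        linarith
      simp only [hf]
      rw [max_eq_right hle, habs]
      ring
    rw [hcongr]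
    have hderiv : ∀ s ∈ Set.uIcc (c - 1/N) c,
        HasDerivAt (fun s => N*s - N^2*(c*s - s^2/2)) (N - N^2*(c - s)) s := by
      intro s _
      have t1 : HasDerivAt (fun s : ℝ => N*s) N s := by
        simpa using (hasDerivAt_id s).const_mul N
      have t2 : HasDerivAt (fun s : ℝ => c*s - s^2/2) (c - s) s := by
        have u1 : HasDerivAt (fun s : ℝ => c*s) c s := by
          simpa using (hasDerivAt_id s).const_mul c
        have u2 : HasDerivAt (fun s : ℝ => s^2/2) s s := by
          have := (hasDerivAt_pow 2 s).div_const 2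
          simpa using this
        exact u1.sub u2
      exact t1.sub (t2.const_mul (N^2))
    rw [integral_eq_sub_of_hasDerivAt hderiv ((Continuous.intervalIntegrable (by fun_prop) _ _))]
    field_simp
    ring
  have hmid2 : ∫ s in c..(c + 1/N), f s = 1/2 := by
    have hcongr : ∫ s in c..(c + 1/N), f s = ∫ s in c..(c + 1/N), (N - N^2*(s - c)) := by
      apply integral_congr
      intro s hs
      rw [Set.uIcc_of_le hcb] at hs
      have habs : |s - c| = s - c := abs_of_nonneg (by linarith [hs.1])
      have hle : 0 ≤ 1 - N * |s - c| := by
        rw [habs]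
        have h3 : s - c ≤ 1/N := by linarith [hs.2]
        have := mul_le_mul_of_nonneg_left h3 hN.le
        rw [mul_one_div, div_self hN.ne'] at this
        linarith
      simp only [hf]
      rw [max_eq_right hle, habs]
      ring
    rw [hcongr]
    have hderiv : ∀ s ∈ Set.uIcc c (c + 1/N),
        HasDerivAt (fun s => N*s - N^2*(s^2/2 - c*s)) (N - N^2*(s - c)) s := by
      intro s _
      have t1 : HasDerivAt (fun s : ℝ => N*s) N s := by
        simpa using (hasDerivAt_id s).const_mul N
      have t2 : HasDerivAt (fun s : ℝ => s^2/2 - c*s) (s - c) s := by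
        have u1 : HasDerivAt (fun s : ℝ => c*s) c s := by
          simpa using (hasDerivAt_id s).const_mul c
        have u2 : HasDerivAt (fun s : ℝ => s^2/2) s s := by
          have := (hasDerivAt_pow 2 s).div_const 2
          simpa using this
        exact u2.sub u1
      exact t1.sub (t2.const_mul (N^2))
    rw [integral_eq_sub_of_hasDerivAt hderiv ((Continuous.intervalIntegrable (by fun_prop) _ _))]
    field_simp
    ring
  rw [split1, hzero1, hzero2, hmid1, hmid2]
  norm_num

abbrev I01 := Set.Icc (0:ℝ) 1

lemma integrable_cont {f : I01 → ℝ} (hf : Continuous f) :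
    Integrable f (volume : Measure I01) :=
  hf.integrable_of_hasCompactSupport (HasCompactSupport.of_compactSpace _)

lemma tent_integral (n : ℕ) {t : ℝ} (ht : t ∈ I01) :
    ∫ s : I01, tentFun n t s = 1 := by
  rw [integral_subtype measurableSet_Icc (tentFun n t),
    MeasureTheory.integral_Icc_eq_integral_Ioc,
    ← intervalIntegral.integral_of_le zero_le_one]
  obtain ⟨hc1, hc2⟩ := cc_mem (n := n) ht
  exact tent_integral_real (NN n) (cc n t) (NN_pos n) hc1 hc2

def tentE (n : ℕ) (t : I01) : E :=
  ⟨fun s => tentFun n t s, (tentFun_continuous n t).comp continuous_subtype_val⟩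

lemma tentE_norm_le (n : ℕ) (t : I01) : ‖tentE n t‖ ≤ NN n := by
  apply ContinuousMap.norm_le _ (NN_pos n).le |>.mpr
  intro s
  show ‖tentFun n t s‖ ≤ NN n
  rw [Real.norm_eq_abs, abs_of_nonneg (tentFun_nonneg n t s)]
  exact tentFun_le n t s

lemma continuous_tentE (n : ℕ) : Continuous fun t : I01 => tentE n t := by
  apply LipschitzWith.continuous (K := (NN n ^ 2).toNNReal)
  apply LipschitzWith.of_dist_le_mul
  intro t t'
  have hC : (0:ℝ) ≤ NN n ^ 2 * dist t t' := by positivity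
  rw [Real.coe_toNNReal _ (by positivity)]
  rw [ContinuousMap.dist_le hC]
  intro s
  rw [Real.dist_eq, Subtype.dist_eq, Real.dist_eq]
  exact tentFun_lip n t t' s

def KK (n : ℕ) (t : I01) : H := iota (tentE n t)

lemma iota_inner (f g : E) : ⟪iota f, iota g⟫ = ∫ s : I01, f s * g s := by
  rw [MeasureTheory.L2.inner_def]
  apply MeasureTheory.integral_congr_ae
  filter_upwards [ContinuousMap.coeFn_toLp (p := 2) (μ := (volume : Measure I01)) (𝕜 := ℝ) f,
    ContinuousMap.coeFn_toLp (p := 2) (μ := (volume : Measure I01)) (𝕜 := ℝ) g] with s hf hg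
  simp only [iota]
  rw [hf, hg, RCLike.inner_apply, conj_trivial]
  ring

def SS (n : ℕ) : H →L[ℝ] E :=
  LinearMap.mkContinuous
    { toFun := fun f => ContinuousMap.mk (fun t => ⟪KK n t, f⟫)
        (Continuous.inner ((iota.continuous.comp (continuous_tentE n))) continuous_const)
      map_add' := fun f g => by ext t; simp [inner_add_right]
      map_smul' := fun c f => by ext t; simp [inner_smul_right] }
    (‖(iota : E →L[ℝ] H)‖ * NN n)
    (fun f => by
      apply ContinuousMap.norm_le _ (mul_nonneg (mul_nonneg (norm_nonneg (iota : E →L[ℝ] H)) (NN_pos n).le) (norm_nonneg f)) |>.mpr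
      intro t
      calc ‖⟪KK n t, f⟫‖ ≤ ‖KK n t‖ * ‖f‖ := norm_inner_le_norm _ _
        _ ≤ (‖(iota : E →L[ℝ] H)‖ * NN n) * ‖f‖ := by
            apply mul_le_mul_of_nonneg_right _ (norm_nonneg f)
            calc ‖KK n t‖ ≤ ‖(iota : E →L[ℝ] H)‖ * ‖tentE n t‖ := iota.le_opNorm _
              _ ≤ ‖(iota : E →L[ℝ] H)‖ * NN n :=
                  mul_le_mul_of_nonneg_left (tentE_norm_le n t) (norm_nonneg (iota : E →L[ℝ] H)))

lemma SS_iota_apply (n : ℕ) (x : E) (t : I01) :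
    SS n (iota x) t = ∫ s : I01, tentFun n t s * x s := by
  show ⟪KK n t, iota x⟫ = _
  rw [KK, iota_inner]
  rfl

lemma SS_iota_tendsto (x : E) : Tendsto (fun n => SS n (iota x)) atTop (𝓝 x) := by
  rw [Metric.tendsto_atTop]
  intro ε hε
  have hux : UniformContinuous (x : I01 → ℝ) :=
    CompactSpace.uniformContinuous_of_continuous x.continuous
  rw [Metric.uniformContinuous_iff] at hux
  obtain ⟨δ, hδ, hd⟩ := hux (ε/2) (by linarith)
  obtain ⟨n₀, hn₀⟩ := exists_nat_gt (3 / δ)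
  refine ⟨n₀, fun n hn => ?_⟩
  have hNn := NN_pos n
  have h3N : 3 / NN n < δ := by
    rw [div_lt_iff₀ hNn]
    have h1 : 3 / δ < NN n := by
      have : (n₀:ℝ) ≤ n := Nat.cast_le.mpr hn
      have : (n:ℝ) ≤ NN n := by unfold NN; linarith
      linarith [hn₀]
    calc 3 = (3/δ) * δ := by field_simp
      _ < NN n * δ := by exact mul_lt_mul_of_pos_right h1 hδ
      _ = δ * NN n := mul_comm _ _
  have key : dist (SS n (iota x)) x ≤ ε/2 := by
    rw [ContinuousMap.dist_le (by linarith)]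
    intro t
    rw [Real.dist_eq, SS_iota_apply]
    have hone := tent_integral n t.2
    have hxt : (x t : ℝ) = ∫ s : I01, tentFun n t s * x t := by
      rw [MeasureTheory.integral_mul_const, hone, one_mul]
    rw [hxt]
    have hcont1 : Continuous fun s : I01 => tentFun n t s * x s :=
      ((tentFun_continuous n t).comp continuous_subtype_val).mul x.continuous
    have hcont2 : Continuous fun s : I01 => tentFun n t s * x t :=
      ((tentFun_continuous n t).comp continuous_subtype_val).mul continuous_const
    have hi1 : Integrable (fun s : I01 => tentFun n t s * x s) volume :=
      integrable_cont hcont1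
    have hi2 : Integrable (fun s : I01 => tentFun n t s * x t) volume :=
      integrable_cont hcont2
    rw [← integral_sub hi1 hi2]
    have hb : ∀ s : I01, |tentFun n t s * x s - tentFun n t s * x t|
        ≤ (ε/2) * tentFun n t s := by
      intro s
      rw [← mul_sub, abs_mul, abs_of_nonneg (tentFun_nonneg n t s)]
      by_cases hk : tentFun n t s = 0
      · simp [hk]
      · have hsc := tentFun_support hk
        have hct := cc_close (n := n) t.2
        have hst : dist s t < δ := by
          rw [Subtype.dist_eq, Real.dist_eq]
          have htri : |(s:ℝ) - (t:ℝ)| ≤ |(s:ℝ) - cc n t| + |cc n t - (t:ℝ)| :=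
            abs_sub_le _ _ _
          have h12 : 1/NN n + 2/NN n = 3/NN n := by ring
          calc |(s:ℝ) - (t:ℝ)| ≤ 1/NN n + 2/NN n := by linarith
            _ = 3/NN n := h12
            _ < δ := h3N
        have hxd : |x s - x t| ≤ ε/2 := by
          have := hd hst
          rw [Real.dist_eq] at this
          linarith
        calc tentFun n t s * |x s - x t| ≤ tentFun n t s * (ε/2) :=
              mul_le_mul_of_nonneg_left hxd (tentFun_nonneg n t s)
          _ = (ε/2) * tentFun n t s := mul_comm _ _
    calc |∫ s : I01, (tentFun n t s * x s - tentFun n t s * x t)|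
        ≤ ∫ s : I01, |tentFun n t s * x s - tentFun n t s * x t| := by
          simpa [Real.norm_eq_abs] using
            norm_integral_le_integral_norm (fun s : I01 => tentFun n t s * x s - tentFun n t s * x t)
      _ ≤ ∫ s : I01, (ε/2) * tentFun n t s := by
          exact integral_mono (hi1.sub hi2).abs
            (integrable_cont (f := fun s : I01 => (ε/2) * tentFun n t (s:ℝ))
              (continuous_const.mul ((tentFun_continuous n t).comp continuous_subtype_val))) hb
      _ = (ε/2) * ∫ s : I01, tentFun n t s := MeasureTheory.integral_const_mul _ _
      _ = ε/2 := by rw [hone, mul_one]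
  linarith [key]


lemma SS_fderiv_comp (n : ℕ) {F : E → ℝ} (hF : ContDiff ℝ 1 F) (y : H) :
    fderiv ℝ (fun v => F (SS n v)) y = (fderiv ℝ F (SS n y)).comp (SS n : H →L[ℝ] E) := by
  show fderiv ℝ (F ∘ (SS n)) y = _
  rw [fderiv_comp y (hF.differentiable one_ne_zero (SS n y)) ((SS n).differentiableAt),
    (SS n).fderiv]

lemma isC1b_comp {F : E → ℝ} (hF : IsC1b F) (n : ℕ) : IsC1b (fun v : H => F (SS n v)) := by
  obtain ⟨hsm, ⟨C1, hC1⟩, ⟨C2, hC2⟩⟩ := hF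
  refine ⟨hsm.comp (SS n).contDiff, ⟨C1, fun v => hC1 _⟩, ⟨C2 * ‖(SS n : H →L[ℝ] E)‖, fun v => ?_⟩⟩
  rw [SS_fderiv_comp n hsm v]
  calc ‖(fderiv ℝ F (SS n v)).comp (SS n : H →L[ℝ] E)‖
      ≤ ‖fderiv ℝ F (SS n v)‖ * ‖(SS n : H →L[ℝ] E)‖ := ContinuousLinearMap.opNorm_comp_le _ _
    _ ≤ C2 * ‖(SS n : H →L[ℝ] E)‖ :=
        mul_le_mul_of_nonneg_right (hC2 _) (norm_nonneg (SS n : H →L[ℝ] E))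

theorem IBP_single (μ : Measure E) [IsProbabilityMeasure μ] (z : E) (w : H → ℝ)
    (hw : Integrable w (μ.map iota))
    (hweight : ∀ ψ : H → ℝ, IsC1b ψ →
      ∫ y, fderiv ℝ ψ y (iota z) ∂(μ.map iota) = ∫ y, ψ y * w y ∂(μ.map iota))
    (F : E → ℝ) (hF : IsC1b F) :
    ∫ x, fderiv ℝ F x z ∂μ = ∫ x, F x * w (iota x) ∂μ := by
  have hiota : Measurable (iota : E → H) := iota.continuous.measurable
  have hwm : AEStronglyMeasurable w (μ.map iota) := hw.aestronglyMeasurable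
  have hwι : Integrable (fun x => w (iota x)) μ := by
    rw [integrable_map_measure hwm hiota.aemeasurable] at hw
    exact hw
  have hFc : Continuous F := hF.1.continuous
  have hDF : Continuous (fderiv ℝ F) := hF.1.continuous_fderiv one_ne_zero
  obtain ⟨C1, hC1⟩ := hF.2.1
  obtain ⟨C2, hC2⟩ := hF.2.2
  -- uniform bound for SS n (iota z)
  obtain ⟨B, hB⟩ := (SS_iota_tendsto z).norm.bddAbove_range
  rw [mem_upperBounds] at hB
  have hBn : ∀ n, ‖SS n (iota z)‖ ≤ B := fun n => hB _ ⟨n, rfl⟩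
  -- the identity for each n
  have key : ∀ n : ℕ, ∫ x, fderiv ℝ F (SS n (iota x)) (SS n (iota z)) ∂μ
      = ∫ x, F (SS n (iota x)) * w (iota x) ∂μ := by
    intro n
    have h0 := hweight (fun v => F (SS n v)) (isC1b_comp hF n)
    have hL : ∫ y, fderiv ℝ (fun v => F (SS n v)) y (iota z) ∂(μ.map iota)
        = ∫ y, fderiv ℝ F (SS n y) (SS n (iota z)) ∂(μ.map iota) := by
      apply MeasureTheory.integral_congr_ae (ae_of_all _ fun y => ?_)
      rw [SS_fderiv_comp n hF.1 y]
      rfl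
    rw [hL] at h0
    have hmL : AEStronglyMeasurable (fun y => fderiv ℝ F (SS n y) (SS n (iota z)))
        (μ.map iota) :=
      ((hDF.comp (SS n).continuous).clm_apply continuous_const).aestronglyMeasurable
    have hmR : AEStronglyMeasurable (fun y => F (SS n y) * w y) (μ.map iota) :=
      ((hFc.comp (SS n).continuous).aestronglyMeasurable).mul hwm
    rw [integral_map hiota.aemeasurable hmL, integral_map hiota.aemeasurable hmR] at h0
    exact h0
  -- limits
  have hLlim : Tendsto (fun n => ∫ x, fderiv ℝ F (SS n (iota x)) (SS n (iota z)) ∂μ)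
      atTop (𝓝 (∫ x, fderiv ℝ F x z ∂μ)) := by
    apply tendsto_integral_of_dominated_convergence (fun _ => C2 * B)
    · intro n
      exact ((hDF.comp ((SS n).continuous.comp iota.continuous)).clm_apply
        continuous_const).aestronglyMeasurable
    · exact integrable_const _
    · intro n
      apply ae_of_all _ fun x => ?_
      calc ‖fderiv ℝ F (SS n (iota x)) (SS n (iota z))‖
          ≤ ‖fderiv ℝ F (SS n (iota x))‖ * ‖SS n (iota z)‖ :=
            (fderiv ℝ F (SS n (iota x))).le_opNorm _
        _ ≤ C2 * B := by
            apply mul_le_mul (hC2 _) (hBn n) (norm_nonneg _)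
            exact le_trans (norm_nonneg _) (hC2 x)
    · apply ae_of_all _ fun x => ?_
      have h1 : Tendsto (fun n => fderiv ℝ F (SS n (iota x))) atTop (𝓝 (fderiv ℝ F x)) :=
        (hDF.tendsto x).comp (SS_iota_tendsto x)
      have h2 := SS_iota_tendsto z
      exact (isBoundedBilinearMap_apply.continuous.tendsto _).comp (h1.prodMk_nhds h2)
  have hRlim : Tendsto (fun n => ∫ x, F (SS n (iota x)) * w (iota x) ∂μ)
      atTop (𝓝 (∫ x, F x * w (iota x) ∂μ)) := by
    apply tendsto_integral_of_dominated_convergence (fun x => C1 * |w (iota x)|)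
    · intro n
      exact ((hFc.comp ((SS n).continuous.comp iota.continuous)).aestronglyMeasurable).mul
        hwι.aestronglyMeasurable
    · exact hwι.abs.const_mul C1
    · intro n
      apply ae_of_all _ fun x => ?_
      rw [Real.norm_eq_abs, abs_mul]
      exact mul_le_mul_of_nonneg_right (hC1 _) (abs_nonneg _)
    · apply ae_of_all _ fun x => ?_
      exact ((hFc.tendsto x).comp (SS_iota_tendsto x)).mul_const _
  exact tendsto_nhds_unique (hLlim.congr fun n => key n) hRlim


end IBPAux

open IBPAux in
/-- If `w ∈ L¹(H, ι_*μ)` is an integration-by-parts weight for `(ι_*μ, ι z)`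
on `H`, then the symmetric integration-by-parts formula holds on `E`:
`∫ Dφ·z ψ dμ = −∫ Dψ·z φ dμ + ∫ φ ψ w(ι·) dμ` for all `φ, ψ ∈ C¹_b(E)`. -/
theorem integration_by_parts_symmetric
    (μ : Measure E) [IsProbabilityMeasure μ] (z : E) (w : H → ℝ)
    (hw : Integrable w (μ.map iota))
    (hweight : ∀ ψ : H → ℝ, IsC1b ψ →
      ∫ y, fderiv ℝ ψ y (iota z) ∂(μ.map iota) = ∫ y, ψ y * w y ∂(μ.map iota))
    (φ ψ : E → ℝ) (hφ : IsC1b φ) (hψ : IsC1b ψ) :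
    ∫ x, fderiv ℝ φ x z * ψ x ∂μ
      = - ∫ x, fderiv ℝ ψ x z * φ x ∂μ + ∫ x, φ x * ψ x * w (iota x) ∂μ := by
  obtain ⟨hφs, ⟨Cφ, hCφ⟩, ⟨Cφ', hCφ'⟩⟩ := hφ
  obtain ⟨hψs, ⟨Cψ, hCψ⟩, ⟨Cψ', hCψ'⟩⟩ := hψ
  have hCφ0 : 0 ≤ Cφ := le_trans (abs_nonneg _) (hCφ 0)
  have hCψ0 : 0 ≤ Cψ := le_trans (abs_nonneg _) (hCψ 0)
  have hdφ : ∀ x, DifferentiableAt ℝ φ x := fun x => hφs.differentiable one_ne_zero x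
  have hdψ : ∀ x, DifferentiableAt ℝ ψ x := fun x => hψs.differentiable one_ne_zero x
  have hFs : ContDiff ℝ 1 (fun x => φ x * ψ x) := hφs.mul hψs
  have hfd : ∀ x, fderiv ℝ (fun y => φ y * ψ y) x
      = φ x • fderiv ℝ ψ x + ψ x • fderiv ℝ φ x := fun x => fderiv_mul (hdφ x) (hdψ x)
  have hF : IsC1b (fun x => φ x * ψ x) := by
    refine ⟨hFs, ⟨Cφ * Cψ, fun x => ?_⟩, ⟨Cφ * Cψ' + Cψ * Cφ', fun x => ?_⟩⟩
    · rw [abs_mul]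
      exact mul_le_mul (hCφ x) (hCψ x) (abs_nonneg _) hCφ0
    · rw [hfd x]
      calc ‖φ x • fderiv ℝ ψ x + ψ x • fderiv ℝ φ x‖
          ≤ ‖φ x • fderiv ℝ ψ x‖ + ‖ψ x • fderiv ℝ φ x‖ :=
              norm_add_le (φ x • fderiv ℝ ψ x) (ψ x • fderiv ℝ φ x)
        _ ≤ Cφ * Cψ' + Cψ * Cφ' := by
            have e1 := ContinuousLinearMap.opNorm_smul_le (φ x) (fderiv ℝ ψ x)
            have e2 := ContinuousLinearMap.opNorm_smul_le (ψ x) (fderiv ℝ φ x)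
            rw [Real.norm_eq_abs] at e1 e2
            have h1 : |φ x| * ‖fderiv ℝ ψ x‖ ≤ Cφ * Cψ' :=
              mul_le_mul (hCφ x) (hCψ' x) (ContinuousLinearMap.opNorm_nonneg _) hCφ0
            have h2 : |ψ x| * ‖fderiv ℝ φ x‖ ≤ Cψ * Cφ' :=
              mul_le_mul (hCψ x) (hCφ' x) (ContinuousLinearMap.opNorm_nonneg _) hCψ0
            linarith
  have hsingle := IBP_single μ z w hw hweight (fun x => φ x * ψ x) hF
  have hpt : ∀ x, fderiv ℝ (fun y => φ y * ψ y) x z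
      = fderiv ℝ φ x z * ψ x + fderiv ℝ ψ x z * φ x := by
    intro x
    rw [hfd x]
    simp only [ContinuousLinearMap.add_apply, ContinuousLinearMap.coe_smul',
      Pi.smul_apply, smul_eq_mul]
    ring
  have hDφc : Continuous fun x => fderiv ℝ φ x z :=
    (hφs.continuous_fderiv one_ne_zero).clm_apply continuous_const
  have hDψc : Continuous fun x => fderiv ℝ ψ x z :=
    (hψs.continuous_fderiv one_ne_zero).clm_apply continuous_const
  have hiφ : Integrable (fun x => fderiv ℝ φ x z * ψ x) μ := by
    apply Integrable.mono' (integrable_const (Cφ' * ‖z‖ * Cψ))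
      ((hDφc.mul hψs.continuous).aestronglyMeasurable)
    apply ae_of_all _ fun x => ?_
    rw [Real.norm_eq_abs, Pi.mul_apply, abs_mul]
    have h1 : |fderiv ℝ φ x z| ≤ Cφ' * ‖z‖ := by
      calc |fderiv ℝ φ x z| ≤ ‖fderiv ℝ φ x‖ * ‖z‖ := (fderiv ℝ φ x).le_opNorm z
        _ ≤ Cφ' * ‖z‖ := mul_le_mul_of_nonneg_right (hCφ' x) (norm_nonneg z)
    exact mul_le_mul h1 (hCψ x) (abs_nonneg _)
      (le_trans (abs_nonneg _) h1)
  have hiψ : Integrable (fun x => fderiv ℝ ψ x z * φ x) μ := by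
    apply Integrable.mono' (integrable_const (Cψ' * ‖z‖ * Cφ))
      ((hDψc.mul hφs.continuous).aestronglyMeasurable)
    apply ae_of_all _ fun x => ?_
    rw [Real.norm_eq_abs, Pi.mul_apply, abs_mul]
    have h1 : |fderiv ℝ ψ x z| ≤ Cψ' * ‖z‖ := by
      calc |fderiv ℝ ψ x z| ≤ ‖fderiv ℝ ψ x‖ * ‖z‖ := (fderiv ℝ ψ x).le_opNorm z
        _ ≤ Cψ' * ‖z‖ := mul_le_mul_of_nonneg_right (hCψ' x) (norm_nonneg z)
    exact mul_le_mul h1 (hCφ x) (abs_nonneg _)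
      (le_trans (abs_nonneg _) h1)
  have hsplit : ∫ x, fderiv ℝ (fun y => φ y * ψ y) x z ∂μ
      = (∫ x, fderiv ℝ φ x z * ψ x ∂μ) + ∫ x, fderiv ℝ ψ x z * φ x ∂μ := by
    rw [← integral_add hiφ hiψ]
    exact MeasureTheory.integral_congr_ae (ae_of_all _ fun x => hpt x)
  rw [hsplit] at hsingle
  linarith
end
end

section
/- Let B = (B_t)_{t∈[0,1]} be a standard Brownian motion on [0,1]. Then almost surely the path t ↦ B_t attains its minimum over [0,1] at a unique point, i.e. P( ∃ s, t ∈ [0,1] with s ≠ t and B_s = B_t = min_{u∈[0,1]} B_u ) = 0. -/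
open MeasureTheory ProbabilityTheory

/-- A standard Brownian motion on the time set `S ⊆ [0,∞)` (with `0 ∈ S`): `B₀ = 0`,
almost surely continuous paths on `S`, independent increments, and Gaussian increments
`B_t − B_s ∼ N(0, t−s)` for `s ≤ t` in `S`. -/
def IsStandardBM {Ω : Type*} [MeasurableSpace Ω] (P : Measure Ω) (B : ℝ → Ω → ℝ)
    (S : Set ℝ) : Prop :=
  (∀ t, Measurable (B t)) ∧
  (∀ᵐ ω ∂P, B 0 ω = 0) ∧
  (∀ᵐ ω ∂P, ContinuousOn (fun t => B t ω) S) ∧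
  (∀ (n : ℕ) (t : Fin (n + 1) → ℝ), Monotone t → (∀ i, t i ∈ S) →
    iIndepFun
      (fun (i : Fin n) => fun ω => B (t i.succ) ω - B (t i.castSucc) ω) P) ∧
  (∀ s t : ℝ, s ∈ S → t ∈ S → s ≤ t →
    Measure.map (fun ω => B t ω - B s ω) P = gaussianReal 0 (Real.toNNReal (t - s)))

section BMAux

open Set

set_option maxHeartbeats 1000000
set_option linter.unusedSectionVars false

lemma iInf_enum_eq (g : ℝ → ℝ) (hc : ContinuousOn g (Icc (0:ℝ) 1))
    {x y s : ℝ} (hx : 0 ≤ x) (hy : y ≤ 1) (hxy : x < y)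
    (f : ℕ → ℝ)
    (hf : insert x (insert y (Icc x y ∩ Set.range ((↑) : ℚ → ℝ))) = Set.range f)
    (hs : s ∈ Icc x y) (hmin : ∀ u ∈ Icc (0:ℝ) 1, g s ≤ g u) :
    ⨅ n, g (f n) = g s := by
  have hD : ∀ n, f n ∈ Icc x y := by
    intro n
    have : f n ∈ insert x (insert y (Icc x y ∩ Set.range ((↑) : ℚ → ℝ))) := by
      rw [hf]; exact ⟨n, rfl⟩
    rcases this with rfl | h
    · exact ⟨le_refl _, hxy.le⟩
    · rcases h with rfl | h
      · exact ⟨hxy.le, le_refl _⟩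
      · exact h.1
  have hD01 : ∀ n, f n ∈ Icc (0:ℝ) 1 :=
    fun n => ⟨hx.trans (hD n).1, (hD n).2.trans hy⟩
  have hs01 : s ∈ Icc (0:ℝ) 1 := ⟨hx.trans hs.1, hs.2.trans hy⟩
  have hbdd : BddBelow (Set.range fun n => g (f n)) := by
    refine ⟨g s, ?_⟩
    rintro _ ⟨n, rfl⟩
    exact hmin _ (hD01 n)
  refine le_antisymm ?_ (le_ciInf fun n => hmin _ (hD01 n))
  refine le_of_forall_pos_le_add ?_
  intro ε hε
  have hcs := hc s hs01
  rw [Metric.continuousWithinAt_iff] at hcs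
  obtain ⟨δ, hδ, hcs⟩ := hcs ε hε
  -- find a point of the enumeration δ-close to s
  obtain ⟨n, hn⟩ : ∃ n, dist (f n) s < δ ∧ f n ∈ Icc (0:ℝ) 1 := by
    by_cases hsy : s = y
    · have : s ∈ Set.range f := by
        rw [← hf]; right; left; exact hsy
      obtain ⟨n, hn⟩ := this
      exact ⟨n, by rw [hn]; simpa using hδ, by rw [hn]; exact hs01⟩
    · have hsy' : s < y := lt_of_le_of_ne hs.2 hsy
      obtain ⟨r, hr1, hr2⟩ := exists_rat_btwn (lt_min hsy' (lt_add_of_pos_right s hδ))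
      have hrD : (r : ℝ) ∈ Set.range f := by
        rw [← hf]
        right; right
        exact ⟨⟨hs.1.trans hr1.le, ((lt_min_iff.1 hr2).1).le⟩, ⟨r, rfl⟩⟩
      obtain ⟨n, hn⟩ := hrD
      refine ⟨n, ?_, hD01 n⟩
      rw [hn, Real.dist_eq, abs_of_pos (by linarith)]
      have := (lt_min_iff.1 hr2).2
      linarith
  have hclose := hcs (hn.2) hn.1
  rw [Real.dist_eq] at hclose
  have : g (f n) < g s + ε := by
    have := abs_lt.1 hclose
    linarith [this.1, this.2]
  exact (ciInf_le hbdd n).trans this.le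

variable {Ω : Type*} [MeasurableSpace Ω] {P : Measure Ω} [IsProbabilityMeasure P]
  {B : ℝ → Ω → ℝ}

lemma indep_of_measurable' {m1 m2 : MeasurableSpace Ω} {mΩ : MeasurableSpace Ω} {μ : Measure Ω}
    (h : Indep m1 m2 μ) {f g : Ω → ℝ}
    (hf : @Measurable Ω ℝ m1 _ f) (hg : @Measurable Ω ℝ m2 _ g) : IndepFun f g μ := by
  rw [IndepFun_iff_Indep, Indep_iff]
  intro t1 t2 ht1 ht2
  exact (Indep_iff _ _ _).1 h t1 t2 (hf.comap_le _ ht1) (hg.comap_le _ ht2)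

lemma indepFun_pre_post (hB : IsStandardBM P B (Icc 0 1)) {c : ℝ} (hc : c ∈ Icc (0:ℝ) 1)
    (F1 F2 : Finset ℝ) (hF1 : ↑F1 ⊆ Icc (0:ℝ) c) (hF2 : ↑F2 ⊆ Icc c (1:ℝ)) :
    IndepFun (fun ω (r : F1) => B r ω) (fun ω (r : F2) => B r ω - B c ω) P := by
  classical
  set F : Finset ℝ := insert 0 (insert c (F1 ∪ F2)) with hF
  have hFsub : ↑F ⊆ Icc (0:ℝ) 1 := by
    intro x hx
    simp only [hF, Finset.coe_insert, Set.mem_insert_iff, Finset.coe_union, Set.mem_union] at hx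
    rcases hx with rfl | rfl | hx | hx
    · exact ⟨le_refl 0, zero_le_one⟩
    · exact hc
    · exact ⟨(hF1 hx).1, (hF1 hx).2.trans hc.2⟩
    · exact ⟨hc.1.trans (hF2 hx).1, (hF2 hx).2⟩
  obtain ⟨n, hn⟩ : ∃ n, F.card = n + 1 := by
    have : 0 < F.card := Finset.card_pos.2 ⟨0, by simp [hF]⟩
    exact ⟨F.card - 1, by omega⟩
  set e := F.orderIsoOfFin hn with he
  set t : Fin (n+1) → ℝ := fun i => (e i : ℝ) with ht
  have htmem : ∀ i, t i ∈ F := fun i => (e i).2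
  have htmono : Monotone t := fun i j hij => Subtype.coe_le_coe.2 (e.monotone hij)
  -- index of an element
  have hts : ∀ (r : ℝ) (hr : r ∈ F), t (e.symm ⟨r, hr⟩) = r := by
    intro r hr; simp [ht]
  have hidx_le : ∀ (r r' : ℝ) (hr : r ∈ F) (hr' : r' ∈ F), r ≤ r' →
      e.symm ⟨r, hr⟩ ≤ e.symm ⟨r', hr'⟩ := by
    intro r r' hr hr' h
    exact e.symm.monotone (Subtype.mk_le_mk.2 h)
  have h0F : (0:ℝ) ∈ F := by simp [hF]
  have hcF : c ∈ F := by simp [hF]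
  have ht0 : t 0 = 0 := by
    have h1 : t 0 ≤ t (e.symm ⟨0, h0F⟩) := htmono (Fin.zero_le _)
    rw [hts 0 h0F] at h1
    exact le_antisymm h1 (hFsub (htmem 0)).1
  set X : Fin n → Ω → ℝ := fun i ω => B (t i.succ) ω - B (t i.castSucc) ω with hXdef
  have hXindep : iIndepFun X P :=
    hB.2.2.2.1 n t htmono (fun i => hFsub (htmem i))
  have hXmeas : ∀ i, Measurable (X i) := fun i => (hB.1 _).sub (hB.1 _)
  -- telescoping
  have tel : ∀ (ω : Ω) (m : ℕ) (hm : m ≤ n),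
      ∑ i ∈ Finset.univ.filter (fun i : Fin n => (i:ℕ) < m), X i ω
        = B (t ⟨m, by omega⟩) ω - B (t 0) ω := by
    intro ω m hm
    induction m with
    | zero =>
        have : Finset.univ.filter (fun i : Fin n => (i:ℕ) < 0) = ∅ := by
          ext i; simp
        rw [this]
        simp only [Finset.sum_empty]
        have : (⟨0, by omega⟩ : Fin (n+1)) = 0 := rfl
        rw [this]; ring
    | succ m ih =>
        have hmn : m < n := by omega
        have hsplit : Finset.univ.filter (fun i : Fin n => (i:ℕ) < m + 1)
            = insert (⟨m, hmn⟩ : Fin n) (Finset.univ.filter (fun i : Fin n => (i:ℕ) < m)) := by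
          ext i
          simp only [Finset.mem_filter, Finset.mem_univ, true_and, Finset.mem_insert, Fin.ext_iff]
          omega
        rw [hsplit, Finset.sum_insert (by simp)]
        rw [ih (by omega)]
        have h1 : X ⟨m, hmn⟩ ω = B (t ⟨m+1, by omega⟩) ω - B (t ⟨m, by omega⟩) ω := by
          simp only [hXdef, Fin.succ_mk, Fin.castSucc_mk]
        rw [h1]; ring
  have tel' : ∀ (ω : Ω) (j : Fin (n+1)),
      ∑ i ∈ Finset.univ.filter (fun i : Fin n => (i:ℕ) < (j:ℕ)), X i ω
        = B (t j) ω - B (t 0) ω := by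
    intro ω j
    have := tel ω (j:ℕ) (by omega)
    have hj : (⟨(j:ℕ), by omega⟩ : Fin (n+1)) = j := by ext; rfl
    rwa [hj] at this
  set k : Fin (n+1) := e.symm ⟨c, hcF⟩ with hk
  set S : Finset (Fin n) := Finset.univ.filter (fun i : Fin n => (i:ℕ) < (k:ℕ)) with hS
  set T : Finset (Fin n) := Finset.univ.filter (fun i : Fin n => (k:ℕ) ≤ (i:ℕ)) with hT
  have hST : Disjoint S T := by
    rw [Finset.disjoint_left]
    intro i hiS hiT
    simp only [hS, hT, Finset.mem_filter] at hiS hiT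
    omega
  have base := hXindep.indepFun_finset S T hST hXmeas
  have hF1F : ∀ r : F1, (r : ℝ) ∈ F := fun r => by
    simp [hF, Finset.mem_union, r.2]
  have hF2F : ∀ r : F2, (r : ℝ) ∈ F := fun r => by
    simp [hF, Finset.mem_union, r.2]
  set idx1 : F1 → Fin (n+1) := fun r => e.symm ⟨(r:ℝ), hF1F r⟩ with hidx1
  set idx2 : F2 → Fin (n+1) := fun r => e.symm ⟨(r:ℝ), hF2F r⟩ with hidx2
  have hidx1_le : ∀ r : F1, (idx1 r : ℕ) ≤ (k : ℕ) :=
    fun r => hidx_le _ _ _ _ (hF1 r.2).2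
  have hidx2_ge : ∀ r : F2, (k : ℕ) ≤ (idx2 r : ℕ) :=
    fun r => hidx_le _ _ _ _ (hF2 r.2).1
  have htidx1 : ∀ r : F1, t (idx1 r) = (r : ℝ) := fun r => hts _ _
  have htidx2 : ∀ r : F2, t (idx2 r) = (r : ℝ) := fun r => hts _ _
  -- sum over subtype reduction
  have subsum : ∀ (G : Finset (Fin n)) (m : ℕ) (ω : Ω),
      (∀ i : Fin n, (i:ℕ) < m → i ∈ G) →
      ∑ i ∈ Finset.univ.filter (fun i : G => ((i : Fin n) : ℕ) < m), X i ω
        = ∑ i ∈ Finset.univ.filter (fun i : Fin n => (i:ℕ) < m), X i ω := by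
    intro G m ω hGm
    rw [Finset.sum_filter]
    rw [Finset.sum_coe_sort (f := fun i : Fin n => if (i:ℕ) < m then X i ω else 0) G]
    rw [← Finset.sum_filter]
    congr 1
    ext i
    simp only [Finset.mem_filter, Finset.mem_univ, true_and, and_iff_right_iff_imp]
    exact hGm i
  set φ : (S → ℝ) → (F1 → ℝ) :=
    fun v r => ∑ i ∈ Finset.univ.filter (fun i : S => ((i : Fin n) : ℕ) < (idx1 r : ℕ)), v i
    with hφ
  set ψ : (T → ℝ) → (F2 → ℝ) :=
    fun v r => ∑ i ∈ Finset.univ.filter (fun i : T => ((i : Fin n) : ℕ) < (idx2 r : ℕ)), v i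
    with hψ
  have hφmeas : Measurable φ :=
    measurable_pi_lambda _ fun r => Finset.measurable_sum _ fun i _ => measurable_pi_apply i
  have hψmeas : Measurable ψ :=
    measurable_pi_lambda _ fun r => Finset.measurable_sum _ fun i _ => measurable_pi_apply i
  have hφcomp : ∀ ω, φ (fun i : S => X i ω) = fun r : F1 => B (r:ℝ) ω - B (t 0) ω := by
    intro ω
    funext r
    show ∑ i ∈ Finset.univ.filter (fun i : S => ((i : Fin n) : ℕ) < (idx1 r : ℕ)), X i ω = _
    rw [subsum S (idx1 r : ℕ) ω (fun i hi => by
      simp only [hS, Finset.mem_filter, Finset.mem_univ, true_and]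
      exact lt_of_lt_of_le hi (hidx1_le r))]
    rw [tel' ω (idx1 r), htidx1 r]
  have hψcomp : ∀ ω, ψ (fun i : T => X i ω) = fun r : F2 => B (r:ℝ) ω - B c ω := by
    intro ω
    funext r
    show ∑ i ∈ Finset.univ.filter (fun i : T => ((i : Fin n) : ℕ) < (idx2 r : ℕ)), X i ω = _
    -- sum over T ∩ {< idx2 r} = sum over {<idx2 r} minus sum over {<k}
    rw [Finset.sum_filter]
    rw [Finset.sum_coe_sort (f := fun i : Fin n => if (i:ℕ) < (idx2 r : ℕ) then X i ω else 0) T]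
    rw [← Finset.sum_filter]
    have hTfilter : T.filter (fun i : Fin n => (i:ℕ) < (idx2 r : ℕ))
        = (Finset.univ.filter (fun i : Fin n => (i:ℕ) < (idx2 r : ℕ))).filter
            (fun i : Fin n => ¬ ((i:ℕ) < (k:ℕ))) := by
      ext i
      simp only [hT, Finset.mem_filter, Finset.mem_univ, true_and]
      omega
    rw [hTfilter]
    have hsplit := Finset.sum_filter_add_sum_filter_not
      (Finset.univ.filter (fun i : Fin n => (i:ℕ) < (idx2 r : ℕ)))
      (fun i : Fin n => (i:ℕ) < (k:ℕ)) (fun i => X i ω)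
    have hinner : (Finset.univ.filter (fun i : Fin n => (i:ℕ) < (idx2 r : ℕ))).filter
        (fun i : Fin n => (i:ℕ) < (k:ℕ)) = Finset.univ.filter (fun i : Fin n => (i:ℕ) < (k:ℕ)) := by
      ext i
      simp only [Finset.mem_filter, Finset.mem_univ, true_and]
      have := hidx2_ge r
      omega
    rw [hinner] at hsplit
    have h2 : ∑ i ∈ (Finset.univ.filter (fun i : Fin n => (i:ℕ) < (idx2 r : ℕ))).filter
        (fun i : Fin n => ¬ ((i:ℕ) < (k:ℕ))), X i ω
        = (∑ i ∈ Finset.univ.filter (fun i : Fin n => (i:ℕ) < (idx2 r : ℕ)), X i ω)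
          - ∑ i ∈ Finset.univ.filter (fun i : Fin n => (i:ℕ) < (k:ℕ)), X i ω := by
      rw [← hsplit]; ring
    rw [h2, tel' ω (idx2 r), tel' ω k, htidx2 r]
    have hktc : t k = c := hts _ _
    rw [hktc]
    ring
  have hcomp : IndepFun (fun ω => φ (fun i : S => X i ω)) (fun ω => ψ (fun i : T => X i ω)) P :=
    base.comp hφmeas hψmeas
  have hψeq : (fun ω => ψ (fun i : T => X i ω)) = fun ω (r : F2) => B (r:ℝ) ω - B c ω := by
    funext ω; exact hψcomp ω
  rw [hψeq] at hcomp
  refine hcomp.congr ?_ (Filter.EventuallyEq.refl _ _)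
  filter_upwards [hB.2.1] with ω h0
  rw [hφcomp ω]
  funext r
  rw [ht0, h0, sub_zero]


lemma indep_pre_post (hmeas : ∀ t, Measurable (B t)) {c : ℝ}
    (hA : ∀ (F1 F2 : Finset ℝ), ↑F1 ⊆ Icc (0:ℝ) c → ↑F2 ⊆ Icc c (1:ℝ) →
      IndepFun (fun ω (r : F1) => B r ω) (fun ω (r : F2) => B r ω - B c ω) P) :
    Indep (⨆ r ∈ Icc (0:ℝ) c, MeasurableSpace.comap (B r) inferInstance)
      (⨆ r ∈ Icc c (1:ℝ), MeasurableSpace.comap (fun ω => B r ω - B c ω) inferInstance) P := by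
  classical
  set m1 : ℝ → MeasurableSpace Ω := fun r => MeasurableSpace.comap (B r) inferInstance with hm1
  set m2 : ℝ → MeasurableSpace Ω :=
    (fun r => MeasurableSpace.comap (fun ω => B r ω - B c ω) inferInstance) with hm2
  set p1 := piiUnionInter (fun r => {s | MeasurableSet[m1 r] s}) (Icc (0:ℝ) c) with hp1
  set p2 := piiUnionInter (fun r => {s | MeasurableSet[m2 r] s}) (Icc c (1:ℝ)) with hp2
  refine IndepSets.indep ?_ ?_ ?_ ?_
    (generateFrom_piiUnionInter_measurableSet m1 _).symm
    (generateFrom_piiUnionInter_measurableSet m2 _).symm ?_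
  · exact iSup₂_le fun r _ => (hmeas r).comap_le
  · exact iSup₂_le fun r _ => ((hmeas r).sub (hmeas c)).comap_le
  · exact isPiSystem_piiUnionInter _ (fun r => @MeasurableSpace.isPiSystem_measurableSet Ω (m1 r)) _
  · exact isPiSystem_piiUnionInter _ (fun r => @MeasurableSpace.isPiSystem_measurableSet Ω (m2 r)) _
  · rw [IndepSets_iff]
    rintro s1 s2 ⟨F1, hF1S, f1, hf1, rfl⟩ ⟨F2, hF2S, f2, hf2, rfl⟩
    have hE1 : ∀ r : F1, ∃ E : Set ℝ, MeasurableSet E ∧ B r ⁻¹' E = f1 r := by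
      intro r
      obtain ⟨E, hEm, hEe⟩ := hf1 r r.2
      exact ⟨E, hEm, hEe⟩
    have hE2 : ∀ r : F2, ∃ E : Set ℝ, MeasurableSet E ∧ (fun ω => B r ω - B c ω) ⁻¹' E = f2 r := by
      intro r
      obtain ⟨E, hEm, hEe⟩ := hf2 r r.2
      exact ⟨E, hEm, hEe⟩
    choose E1 hE1m hE1e using hE1
    choose E2 hE2m hE2e using hE2
    have hs1 : ⋂ r ∈ F1, f1 r = (fun ω (r : F1) => B r ω) ⁻¹' (univ.pi fun r : F1 => E1 r) := by
      ext ω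
      simp only [Set.mem_iInter, Set.mem_preimage, Set.mem_pi, Set.mem_univ, true_implies]
      constructor
      · intro h r
        have := h r r.2
        rw [← hE1e r] at this
        exact this
      · intro h r hr
        rw [← hE1e ⟨r, hr⟩]
        exact h ⟨r, hr⟩
    have hs2 : ⋂ r ∈ F2, f2 r
        = (fun ω (r : F2) => B r ω - B c ω) ⁻¹' (univ.pi fun r : F2 => E2 r) := by
      ext ω
      simp only [Set.mem_iInter, Set.mem_preimage, Set.mem_pi, Set.mem_univ, true_implies]
      constructor
      · intro h r
        have := h r r.2
        rw [← hE2e r] at this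
        exact this
      · intro h r hr
        rw [← hE2e ⟨r, hr⟩]
        exact h ⟨r, hr⟩
    rw [hs1, hs2]
    exact (hA F1 F2 hF1S hF2S).meas_inter
      ⟨_, MeasurableSet.univ_pi fun r => hE1m r, rfl⟩
      ⟨_, MeasurableSet.univ_pi fun r => hE2m r, rfl⟩

lemma key_null (hmeas : ∀ t, Measurable (B t))
    (hgauss : ∀ s t : ℝ, s ∈ Icc (0:ℝ) 1 → t ∈ Icc (0:ℝ) 1 → s ≤ t →
      Measure.map (fun ω => B t ω - B s ω) P = gaussianReal 0 (Real.toNNReal (t - s)))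
    (hindep : ∀ c : ℝ, c ∈ Icc (0:ℝ) 1 →
      Indep (⨆ r ∈ Icc (0:ℝ) c, MeasurableSpace.comap (B r) inferInstance)
        (⨆ r ∈ Icc c (1:ℝ), MeasurableSpace.comap (fun ω => B r ω - B c ω) inferInstance) P)
    {p q : ℝ} (hp : 0 < p) (hpq : p < q) (hq : q < 1)
    (a b : ℕ → ℝ) (ha : ∀ n, a n ∈ Icc (0:ℝ) p) (hb : ∀ n, b n ∈ Icc q 1) :
    P {ω | (⨅ n, B (a n) ω) - B q ω = ⨅ n, (B (b n) ω - B q ω)} = 0 := by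
  have hp1 : p ∈ Icc (0:ℝ) 1 := ⟨hp.le, (hpq.trans hq).le⟩
  have hq1 : q ∈ Icc (0:ℝ) 1 := ⟨(hp.trans hpq).le, hq.le⟩
  set M1 : Ω → ℝ := fun ω => ⨅ n, B (a n) ω with hM1
  set Z : Ω → ℝ := fun ω => ⨅ n, (B (b n) ω - B q ω) with hZ
  set U : Ω → ℝ := fun ω => M1 ω - B p ω with hU
  set X : Ω → ℝ := fun ω => B q ω - B p ω with hX
  set W : Ω → ℝ := fun ω => M1 ω - B q ω with hW
  have hM1m : Measurable M1 := Measurable.iInf fun n => hmeas _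
  have hZm : Measurable Z := Measurable.iInf fun n => (hmeas _).sub (hmeas _)
  have hUm : Measurable U := hM1m.sub (hmeas _)
  have hXm : Measurable X := (hmeas _).sub (hmeas _)
  have hWm : Measurable W := hM1m.sub (hmeas _)
  -- Independence of U and X
  have hUX : IndepFun U X P := by
    refine indep_of_measurable' (hindep p hp1) ?_ ?_
    · have h1 : ∀ n : ℕ, @Measurable Ω ℝ (⨆ r ∈ Icc (0:ℝ) p,
          MeasurableSpace.comap (B r) inferInstance) _ (B (a n)) := fun n =>
        measurable_iff_comap_le.2 (le_iSup₂ (f := fun r (_ : r ∈ Icc (0:ℝ) p) =>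
          MeasurableSpace.comap (B r) inferInstance) (a n) (ha n))
      have h2 : @Measurable Ω ℝ (⨆ r ∈ Icc (0:ℝ) p,
          MeasurableSpace.comap (B r) inferInstance) _ (B p) :=
        measurable_iff_comap_le.2 (le_iSup₂ (f := fun r (_ : r ∈ Icc (0:ℝ) p) =>
          MeasurableSpace.comap (B r) inferInstance) p ⟨hp.le, le_refl p⟩)
      exact Measurable.sub (Measurable.iInf h1) h2
    · exact measurable_iff_comap_le.2 (le_iSup₂ (f := fun r (_ : r ∈ Icc p 1) =>
        MeasurableSpace.comap (fun ω => B r ω - B p ω) inferInstance) q ⟨hpq.le, hq.le⟩)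
  -- Independence of Z and W
  have hZW : IndepFun Z W P := by
    refine indep_of_measurable' (hindep q hq1).symm ?_ ?_
    · exact Measurable.iInf fun n => measurable_iff_comap_le.2
        (le_iSup₂ (f := fun r (_ : r ∈ Icc q 1) =>
          MeasurableSpace.comap (fun ω => B r ω - B q ω) inferInstance) (b n) (hb n))
    · have h1 : ∀ n : ℕ, @Measurable Ω ℝ (⨆ r ∈ Icc (0:ℝ) q,
          MeasurableSpace.comap (B r) inferInstance) _ (B (a n)) := fun n =>
        measurable_iff_comap_le.2 (le_iSup₂ (f := fun r (_ : r ∈ Icc (0:ℝ) q) =>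
          MeasurableSpace.comap (B r) inferInstance) (a n)
          ⟨(ha n).1, (ha n).2.trans hpq.le⟩)
      have h2 : @Measurable Ω ℝ (⨆ r ∈ Icc (0:ℝ) q,
          MeasurableSpace.comap (B r) inferInstance) _ (B q) :=
        measurable_iff_comap_le.2 (le_iSup₂ (f := fun r (_ : r ∈ Icc (0:ℝ) q) =>
          MeasurableSpace.comap (B r) inferInstance) q ⟨(hp.trans hpq).le, le_refl q⟩)
      exact Measurable.sub (Measurable.iInf h1) h2
  -- X has atomless law
  have hXatom : ∀ x : ℝ, Measure.map X P {x} = 0 := by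
    intro x
    rw [hgauss p q hp1 hq1 hpq.le]
    have hv : Real.toNNReal (q - p) ≠ 0 := by
      rw [← NNReal.coe_ne_zero, Real.coe_toNNReal _ (by linarith)]
      exact ne_of_gt (by linarith)
    exact gaussianReal_absolutelyContinuous 0 hv (measure_singleton x)
  -- W has atomless law
  have hWatom : ∀ x : ℝ, P {ω | W ω = x} = 0 := by
    intro x
    have hprod : Measure.map (fun ω => (U ω, X ω)) P
        = (Measure.map U P).prod (Measure.map X P) :=
      (indepFun_iff_map_prod_eq_prod_map_map hUm.aemeasurable hXm.aemeasurable).1 hUX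
    have hset : {ω | W ω = x} = (fun ω => (U ω, X ω)) ⁻¹' {y : ℝ × ℝ | y.1 - y.2 = x} := by
      ext ω
      simp only [Set.mem_setOf_eq, Set.mem_preimage, hW, hU, hX]
      constructor <;> intro h <;> linarith
    have hDset : MeasurableSet {y : ℝ × ℝ | y.1 - y.2 = x} :=
      measurableSet_eq_fun (measurable_fst.sub measurable_snd) measurable_const
    rw [hset, ← Measure.map_apply (hUm.prodMk hXm) hDset, hprod,
      Measure.prod_apply hDset]
    have : ∀ u : ℝ, (Measure.map X P) (Prod.mk u ⁻¹' {y : ℝ × ℝ | y.1 - y.2 = x})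
        = 0 := by
      intro u
      have : Prod.mk u ⁻¹' {y : ℝ × ℝ | y.1 - y.2 = x} = {u - x} := by
        ext v
        simp only [Set.mem_preimage, Set.mem_setOf_eq, Set.mem_singleton_iff]
        constructor <;> intro h <;> linarith
      rw [this]
      exact hXatom _
    simp only [this, lintegral_zero]
  -- conclude
  have hset : {ω | (⨅ n, B (a n) ω) - B q ω = ⨅ n, (B (b n) ω - B q ω)}
      = (fun ω => (Z ω, W ω)) ⁻¹' {y : ℝ × ℝ | y.2 = y.1} := by
    ext ω
    simp only [Set.mem_setOf_eq, Set.mem_preimage, hW, hZ, hM1]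
  have hDset : MeasurableSet {y : ℝ × ℝ | y.2 = y.1} :=
    measurableSet_eq_fun measurable_snd measurable_fst
  have hprod : Measure.map (fun ω => (Z ω, W ω)) P
      = (Measure.map Z P).prod (Measure.map W P) :=
    (indepFun_iff_map_prod_eq_prod_map_map hZm.aemeasurable hWm.aemeasurable).1 hZW
  rw [hset, ← Measure.map_apply (hZm.prodMk hWm) hDset, hprod, Measure.prod_apply hDset]
  have : ∀ z : ℝ, (Measure.map W P) (Prod.mk z ⁻¹' {y : ℝ × ℝ | y.2 = y.1}) = 0 := by
    intro z
    have h1 : Prod.mk z ⁻¹' {y : ℝ × ℝ | y.2 = y.1} = {w : ℝ | w = z} := by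
      ext w; simp [eq_comm]
    rw [h1]
    have h2 : {w : ℝ | w = z} = {z} := by ext w; simp
    rw [h2, Measure.map_apply hWm (measurableSet_singleton z)]
    exact hWatom z
  simp only [this, lintegral_zero]

end BMAux

set_option maxHeartbeats 1000000 in
/-- A standard Brownian motion on `[0,1]` almost surely attains its minimum
over `[0,1]` at a unique point. -/
theorem brownian_motion_unique_argmin
    {Ω : Type*} [MeasurableSpace Ω] (P : Measure Ω) [IsProbabilityMeasure P]
    (B : ℝ → Ω → ℝ) (hB : IsStandardBM P B (Set.Icc (0:ℝ) 1)) :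
    P {ω | ∃ s ∈ Set.Icc (0:ℝ) 1, ∃ t ∈ Set.Icc (0:ℝ) 1, s ≠ t ∧
      (∀ u ∈ Set.Icc (0:ℝ) 1, B s ω ≤ B u ω) ∧ B s ω = B t ω} = 0 := by
  classical
  open Set in
  obtain ⟨hmeas, h0, hcont, hincr, hgauss⟩ := hB
  -- σ-algebra independence of pre- and post-c processes
  have hindep : ∀ c : ℝ, c ∈ Icc (0:ℝ) 1 →
      Indep (⨆ r ∈ Icc (0:ℝ) c, MeasurableSpace.comap (B r) inferInstance)
        (⨆ r ∈ Icc c (1:ℝ), MeasurableSpace.comap (fun ω => B r ω - B c ω) inferInstance) P := by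
    intro c hc
    exact indep_pre_post hmeas
      (fun F1 F2 hF1 hF2 =>
        indepFun_pre_post ⟨hmeas, h0, hcont, hincr, hgauss⟩ hc F1 F2 hF1 hF2)
  -- enumerations of rational-dense sets with endpoints
  have henum : ∀ x y : ℝ, ∃ f : ℕ → ℝ, x < y →
      insert x (insert y (Icc x y ∩ Set.range ((↑) : ℚ → ℝ))) = Set.range f := by
    intro x y
    by_cases hxy : x < y
    · have hcnt : (insert x (insert y (Icc x y ∩ Set.range ((↑) : ℚ → ℝ)))).Countable :=
        (((Set.countable_range _).mono Set.inter_subset_right).insert y).insert x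
      obtain ⟨f, hf⟩ := hcnt.exists_eq_range ⟨x, Set.mem_insert _ _⟩
      exact ⟨f, fun _ => hf⟩
    · exact ⟨fun _ => 0, fun h => absurd h hxy⟩
  choose A hA using henum
  have hAmem : ∀ x y : ℝ, x < y → ∀ n, A x y n ∈ Icc x y := by
    intro x y hxy n
    have : A x y n ∈ insert x (insert y (Icc x y ∩ Set.range ((↑) : ℚ → ℝ))) := by
      rw [hA x y hxy]; exact ⟨n, rfl⟩
    rcases this with h | h
    · rw [h]; exact ⟨le_refl _, hxy.le⟩
    · rcases h with h | h
      · rw [h]; exact ⟨hxy.le, le_refl _⟩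
      · exact h.1
  -- the null events
  set E : ℚ → ℚ → Set Ω := fun p q =>
    {ω | (⨅ n, B (A 0 p n) ω) - B q ω = ⨅ n, (B (A q 1 n) ω - B q ω)} with hE
  have hEnull : ∀ p q : ℚ, 0 < (p:ℝ) → (p:ℝ) < q → (q:ℝ) < 1 → P (E p q) = 0 := by
    intro p q hp hpq hq
    exact key_null hmeas hgauss hindep hp hpq hq (A 0 p) (A q 1)
      (hAmem 0 p hp) (hAmem q 1 hq)
  set N : Set Ω :=
    (⋃ (pq : ℚ × ℚ) (_ : 0 < ((pq.1:ℝ)) ∧ ((pq.1:ℝ)) < pq.2 ∧ ((pq.2:ℝ)) < 1),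
        E pq.1 pq.2) ∪
      {ω | ¬ ContinuousOn (fun u => B u ω) (Icc (0:ℝ) 1)} with hN
  have hNnull : P N = 0 := by
    refine measure_union_null ?_ ?_
    · refine measure_iUnion_null fun pq => measure_iUnion_null fun h => ?_
      exact hEnull pq.1 pq.2 h.1 h.2.1 h.2.2
    · exact ae_iff.1 hcont
  refine measure_mono_null ?_ hNnull
  intro ω hω
  obtain ⟨s, hs, t, ht, hst, hmin, heq⟩ := hω
  by_cases hcω : ContinuousOn (fun u => B u ω) (Icc (0:ℝ) 1)
  swap
  · exact Set.mem_union_right _ hcω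
  left
  -- reorder so that s' < t', both argmins
  obtain ⟨s', t', hs', ht', hlt, hmin', heq'⟩ :
      ∃ s' t', s' ∈ Icc (0:ℝ) 1 ∧ t' ∈ Icc (0:ℝ) 1 ∧ s' < t' ∧
        (∀ u ∈ Icc (0:ℝ) 1, B s' ω ≤ B u ω) ∧ B s' ω = B t' ω := by
    rcases hst.lt_or_gt with h | h
    · exact ⟨s, t, hs, ht, h, hmin, heq⟩
    · refine ⟨t, s, ht, hs, h, ?_, heq.symm⟩
      intro u hu
      rw [← heq]
      exact hmin u hu
  obtain ⟨pr, hp1, hp2⟩ := exists_rat_btwn hlt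
  obtain ⟨qr, hq1, hq2⟩ := exists_rat_btwn hp2
  have hp0 : (0:ℝ) < pr := lt_of_le_of_lt hs'.1 hp1
  have hq3 : (qr:ℝ) < 1 := lt_of_lt_of_le hq2 ht'.2
  refine Set.mem_iUnion.2 ⟨(pr, qr), Set.mem_iUnion.2 ⟨⟨hp0, hq1, hq3⟩, ?_⟩⟩
  -- show membership in E pr qr
  have claimM : (⨅ n, B (A 0 pr n) ω) = B s' ω :=
    iInf_enum_eq (fun u => B u ω) hcω (le_refl 0) (by linarith) hp0 (A 0 pr)
      (hA 0 pr hp0) ⟨hs'.1, hp1.le⟩ hmin'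
  have hminT : ∀ u ∈ Icc (0:ℝ) 1, B t' ω - B (qr:ℝ) ω ≤ B u ω - B (qr:ℝ) ω := by
    intro u hu
    have h1 : B t' ω ≤ B u ω := by
      rw [← heq']
      exact hmin' u hu
    linarith
  have claimZ : (⨅ n, (B (A qr 1 n) ω - B (qr:ℝ) ω)) = B t' ω - B (qr:ℝ) ω :=
    iInf_enum_eq (fun u => B u ω - B (qr:ℝ) ω) (hcω.sub continuousOn_const)
      (by linarith [hp0, hp2] : (0:ℝ) ≤ (qr:ℝ)) (le_refl 1) hq3 (A qr 1)
      (hA qr 1 hq3) ⟨hq2.le, ht'.2⟩ hminT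
  show (⨅ n, B (A 0 pr n) ω) - B (qr:ℝ) ω = ⨅ n, (B (A qr 1 n) ω - B (qr:ℝ) ω)
  rw [claimM, claimZ, heq']
end
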